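/- arXiv:1612.09565 — 4 statements merged into one kernel-verified Lean document; each statement's English description precedes it below -/
import Mathlib

section
/- Let Ψ ∈ ℂ^{n×n} be the unitary DFT matrix and let Φ = [Φ_1ᵀ, …, Φ_ℓᵀ]ᵀ ∈ ℂ^{L×n} (L = ℓn) be a concatenation of circulant matrices Φ_j = Ψ* diag(λ_j) Ψ, with λ_j = √n Ψ φ_j, and suppose Φ is injective, i.e. Σ_{j=1}^ℓ |λ_j[k]|² > 0 for all k ∈ [n]. Let 𝒢 = {𝒢_1,…,𝒢_n} be the partition of [L] with 𝒢_k = {(j−1)n + k : j ∈ [ℓ]}. Set T = Φ Ψ* and T̃ = (T†)*, and for any γ > 0 define group local incoherence parameters μ_{𝒢,k} = n γ max_{k'∈[n]} ‖Π_{𝒢_{k'}} T e_k‖_2² and μ̃_{𝒢,k} = n γ^{−1} max_{k'∈[n]} ‖Π_{𝒢_{k'}} T̃ e_k‖_2². Then μ_{𝒢,k} = γ Σ_{j=1}^ℓ |λ_j[k]|² and μ̃_{𝒢,k} = γ^{−1} (Σ_{j=1}^ℓ |λ_j[k]|²)^{−1}, so μ_{𝒢,k} μ̃_{𝒢,k}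 = 1 for every k ∈ [n], and consequently the group variable density sampling distribution P(ω = k) = √(μ_{𝒢,k} μ̃_{𝒢,k})/Σ_{j=1}^n √(μ_{𝒢,j} μ̃_{𝒢,j}) is the uniform distribution on [n]. -/
open scoped BigOperators ENNReal
open Classical MeasureTheory
open scoped Matrix

noncomputable section

namespace TSR

/-- ℓ2 norm of a finite complex vector. -/
def l2norm {d : ℕ} (v : Fin d → ℂ) : ℝ := Real.sqrt (∑ i, ‖v i‖ ^ 2)

/-- ℓ1 norm of a finite complex vector. -/
def l1norm {d : ℕ} (v : Fin d → ℂ) : ℝ := ∑ i, ‖v i‖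

/-- ℓ∞ norm of a finite complex vector. -/
def linfnorm {d : ℕ} (v : Fin d → ℂ) : ℝ := ⨆ i, ‖v i‖

/-- Spectral norm (`ℓ2 → ℓ2` operator norm) of a matrix. -/
def specNorm {d e : ℕ} (A : Matrix (Fin d) (Fin e) ℂ) : ℝ :=
  ‖LinearMap.toContinuousLinearMap (Matrix.toEuclideanLin A)‖

/-- Largest singular value. -/
def sigmaMax {d e : ℕ} (A : Matrix (Fin d) (Fin e) ℂ) : ℝ := specNorm A

/-- Smallest singular value: the infimum of `‖A v‖₂` over unit vectors `v`. -/
def sigmaMin {d e : ℕ} (A : Matrix (Fin d) (Fin e) ℂ) : ℝ :=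
  sInf {r : ℝ | ∃ v : Fin e → ℂ, l2norm v = 1 ∧ r = l2norm (A.mulVec v)}

/-- Maximum ℓ2 norm of the columns of a matrix (the `1 → 2` operator norm). -/
def maxColL2 {d e : ℕ} (A : Matrix (Fin d) (Fin e) ℂ) : ℝ :=
  ⨆ k : Fin e, l2norm (fun i => A i k)

/-- `B` is the Moore–Penrose pseudoinverse of `A` (the four Penrose conditions). -/
def IsMoorePenrose {ι κ : Type*} [Fintype ι] [Fintype κ] [DecidableEq ι] [DecidableEq κ]
    (A : Matrix ι κ ℂ) (B : Matrix κ ι ℂ) : Prop :=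
  A * B * A = A ∧ B * A * B = B ∧ (A * B)ᴴ = A * B ∧ (B * A)ᴴ = B * A

/-- `γ > 0` minimizes `‖γ' T*T − I‖` over `γ' > 0` (the balancing parameter). -/
def IsBalancing {e d : ℕ} (T : Matrix (Fin d) (Fin e) ℂ) (γ : ℝ) : Prop :=
  0 < γ ∧ ∀ γ' : ℝ, 0 < γ' →
    specNorm ((γ : ℂ) • (Tᴴ * T) - 1) ≤ specNorm ((γ' : ℂ) • (Tᴴ * T) - 1)

/-- Local incoherence parameter `n γ ‖A e_k‖_∞²` of the `k`-th column. -/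
def locIncoh {e d : ℕ} (γ : ℝ) (A : Matrix (Fin d) (Fin e) ℂ) (k : Fin e) : ℝ :=
  (e : ℝ) * γ * (linfnorm fun i => A i k) ^ 2

/-- The (worst case) incoherence parameter `μ`. -/
def incoherence {e d : ℕ} (γ : ℝ) (T Ttil : Matrix (Fin d) (Fin e) ℂ) : ℝ :=
  ⨆ k : Fin e, max (locIncoh γ T k) (locIncoh γ⁻¹ Ttil k)

/-- The variable-density weight `√(μ_k μ̃_k)`. -/
def vdWeight {e d : ℕ} (γ : ℝ) (T Ttil : Matrix (Fin d) (Fin e) ℂ) (k : Fin e) : ℝ :=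
  Real.sqrt (locIncoh γ T k * locIncoh γ⁻¹ Ttil k)

/-- The average incoherence parameter `μ̄ = (1/n) ∑ √(μ_k μ̃_k)`. -/
def avgIncoh {e d : ℕ} (γ : ℝ) (T Ttil : Matrix (Fin d) (Fin e) ℂ) : ℝ :=
  (1 / (e : ℝ)) * ∑ k, vdWeight γ T Ttil k

/-- The sampling matrix `S_Ω` of a multiset of indices `ω : Fin m → Fin n`. -/
def sampMat {n m : ℕ} (ω : Fin m → Fin n) : Matrix (Fin m) (Fin n) ℂ :=
  fun j k => if ω j = k then 1 else 0

/-- Coordinate projection `Π_J` onto a set of coordinates, as a matrix. -/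
def projMat {d : ℕ} (J : Set (Fin d)) : Matrix (Fin d) (Fin d) ℂ :=
  fun i j => if i = j ∧ i ∈ J then 1 else 0

/-- Number of non-zero entries. -/
def sparsity {d : ℕ} (v : Fin d → ℂ) : ℕ :=
  (Finset.univ.filter fun i => v i ≠ 0).card

/-- Number of distinct elements of the multiset `Ω` (that is, `|Ω'|`). -/
def distinctCard {n m : ℕ} (ω : Fin m → Fin n) : ℕ :=
  (Finset.image ω Finset.univ).card

/-- Maximal multiplicity of an element of the multiset `Ω`. -/
def maxMult {n m : ℕ} (ω : Fin m → Fin n) : ℕ :=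
  Finset.univ.sup fun k : Fin n => (Finset.univ.filter fun j => ω j = k).card

/-- Entrywise complex signum. -/
def csgn {d : ℕ} (z : Fin d → ℂ) : Fin d → ℂ :=
  fun k => if z k = 0 then 0 else z k / (‖z k‖ : ℂ)

/-- `G` is a partition of the coordinates into disjoint nonempty groups. -/
def IsPartition {L N : ℕ} (G : Fin N → Finset (Fin L)) : Prop :=
  (∀ j, (G j).Nonempty) ∧ (∀ j j', j ≠ j' → Disjoint (G j) (G j')) ∧
    Finset.univ.biUnion G = Finset.univ

/-- The mixed (group) norm `‖z‖_{𝒢,1} = ∑_j ‖Π_{𝒢_j} z‖₂`. -/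
def mixedNorm {L N : ℕ} (G : Fin N → Finset (Fin L)) (z : Fin L → ℂ) : ℝ :=
  ∑ j, Real.sqrt (∑ i ∈ G j, ‖z i‖ ^ 2)

/-- `z` is `(s,t)` strongly group sparse with respect to the partition `G`. -/
def StronglyGroupSparse {L N : ℕ} (G : Fin N → Finset (Fin L)) (s t : ℕ)
    (z : Fin L → ℂ) : Prop :=
  ∃ J : Finset (Fin N), (∀ i, z i ≠ 0 → i ∈ J.biUnion G) ∧
    (J.biUnion G).card ≤ t ∧ J.card ≤ s

/-- Group local incoherence `max_j n γ ‖Π_{𝒢_j} A e_k‖₂²`. -/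
def groupLocIncoh {n L N : ℕ} (G : Fin N → Finset (Fin L)) (γ : ℝ)
    (A : Matrix (Fin L) (Fin n) ℂ) (k : Fin n) : ℝ :=
  ⨆ j : Fin N, (n : ℝ) * γ * ∑ i ∈ G j, ‖A i k‖ ^ 2

/-- Group incoherence parameter `μ_𝒢`. -/
def groupIncoh {n L N : ℕ} (G : Fin N → Finset (Fin L)) (γ : ℝ)
    (T Ttil : Matrix (Fin L) (Fin n) ℂ) : ℝ :=
  ⨆ k : Fin n, max (groupLocIncoh G γ T k) (groupLocIncoh G γ⁻¹ Ttil k)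

/-- Group variable density weight `√(μ_{𝒢,k} μ̃_{𝒢,k})`. -/
def groupVdWeight {n L N : ℕ} (G : Fin N → Finset (Fin L)) (γ : ℝ)
    (T Ttil : Matrix (Fin L) (Fin n) ℂ) (k : Fin n) : ℝ :=
  Real.sqrt (groupLocIncoh G γ T k * groupLocIncoh G γ⁻¹ Ttil k)

/-- Group average incoherence `μ̄_𝒢`. -/
def groupAvgIncoh {n L N : ℕ} (G : Fin N → Finset (Fin L)) (γ : ℝ)
    (T Ttil : Matrix (Fin L) (Fin n) ℂ) : ℝ :=
  (1 / (n : ℝ)) * ∑ k, groupVdWeight G γ T Ttil k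

/-- The unitary DFT matrix. -/
def dft (n : ℕ) : Matrix (Fin n) (Fin n) ℂ :=
  fun j k => ((1 / Real.sqrt n : ℝ) : ℂ) *
    Complex.exp (-(2 * Real.pi * Complex.I * (j : ℕ) * (k : ℕ)) / n)



lemma dft_mul_conjTranspose (n : ℕ) (hn : 0 < n) : dft n * (dft n)ᴴ = 1 := by
  have hn' : (n : ℂ) ≠ 0 := Nat.cast_ne_zero.mpr hn.ne'
  ext j k
  simp only [Matrix.mul_apply, Matrix.conjTranspose_apply, dft, Complex.star_def]
  have hsqR : (1 / Real.sqrt n) * (1 / Real.sqrt n) = 1 / n := by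
    rw [div_mul_div_comm, Real.mul_self_sqrt (by positivity)]
    norm_num
  have hsq : ((1 / Real.sqrt n : ℝ) : ℂ) * ((1 / Real.sqrt n : ℝ) : ℂ) = (1 / n : ℂ) := by
    rw [← Complex.ofReal_mul, hsqR]; push_cast; ring
  set ζ : ℂ := Complex.exp (2 * Real.pi * Complex.I * ((k : ℂ) - (j : ℂ)) / n) with hζ
  have hterm : ∀ m : Fin n,
      (((1 / Real.sqrt n : ℝ) : ℂ) * Complex.exp (-(2 * Real.pi * Complex.I * (j : ℕ) * (m : ℕ)) / n)) *
        (starRingEnd ℂ) (((1 / Real.sqrt n : ℝ) : ℂ) * Complex.exp (-(2 * Real.pi * Complex.I * (k : ℕ) * (m : ℕ)) / n))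
      = (1 / n : ℂ) * ζ ^ (m : ℕ) := by
    intro m
    rw [map_mul, ← Complex.exp_conj, Complex.conj_ofReal]
    rw [hζ, ← Complex.exp_nat_mul]
    have hc : (starRingEnd ℂ) (-(2 * Real.pi * Complex.I * (k : ℕ) * (m : ℕ)) / n)
        = (2 * Real.pi * Complex.I * (k : ℕ) * (m : ℕ)) / n := by
      simp only [map_div₀, map_neg, map_mul, Complex.conj_I, Complex.conj_ofReal, map_ofNat,
        map_natCast]
      ring
    rw [hc, mul_mul_mul_comm, hsq, ← Complex.exp_add]
    have hexp : -(2 * Real.pi * Complex.I * (j : ℕ) * (m : ℕ)) / n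
        + 2 * Real.pi * Complex.I * (k : ℕ) * (m : ℕ) / n
        = (m : ℕ) * (2 * Real.pi * Complex.I * ((k : ℂ) - (j : ℂ)) / n) := by
      field_simp
      ring
    rw [hexp]
  rw [Finset.sum_congr rfl fun m _ => hterm m, ← Finset.mul_sum]
  have hζn : ζ ^ n = 1 := by
    rw [hζ, ← Complex.exp_nat_mul]
    have : (n : ℂ) * (2 * Real.pi * Complex.I * ((k : ℂ) - (j : ℂ)) / n)
        = (((k : ℤ) - (j : ℤ) : ℤ) : ℂ) * (2 * Real.pi * Complex.I) := by
      push_cast; field_simp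
    rw [this, Complex.exp_int_mul_two_pi_mul_I]
  by_cases hjk : j = k
  · subst hjk
    have hζ1 : ζ = 1 := by rw [hζ]; simp
    simp [hζ1, Matrix.one_apply]
    exact inv_mul_cancel₀ hn'
  · have hζ1 : ζ ≠ 1 := by
      rw [hζ]
      intro hone
      rw [Complex.exp_eq_one_iff] at hone
      obtain ⟨m, hm⟩ := hone
      have hI : (2 * (Real.pi : ℂ) * Complex.I) ≠ 0 := by
        simp [Real.pi_ne_zero, Complex.I_ne_zero]
      have hm2 : ((k : ℂ) - (j : ℂ)) * (2 * Real.pi * Complex.I)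
          = ((m : ℂ) * n) * (2 * Real.pi * Complex.I) := by
        field_simp at hm
        linear_combination (2 * (Real.pi : ℂ) * Complex.I) * hm
      have hm3 : ((k : ℂ) - (j : ℂ)) = (m : ℂ) * n := mul_right_cancel₀ hI hm2
      have hm4 : ((k : ℤ) - (j : ℤ)) = m * n := by exact_mod_cast hm3
      have h1 : ((k : Fin n) : ℤ) < n := by exact_mod_cast k.2
      have h2 : ((j : Fin n) : ℤ) < n := by exact_mod_cast j.2
      have h3 : ((k : Fin n) : ℤ) ≠ ((j : Fin n) : ℤ) := by
        intro h; exact hjk (Fin.ext (by exact_mod_cast h.symm))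
      have h4 : (0:ℤ) ≤ ((k : Fin n) : ℤ) := by positivity
      have h5 : (0:ℤ) ≤ ((j : Fin n) : ℤ) := by positivity
      have hnz : (1:ℤ) ≤ n := by exact_mod_cast hn
      rcases lt_trichotomy m 0 with h | h | h
      · have : m * n ≤ -n := by nlinarith
        omega
      · rw [h] at hm4; simp at hm4; omega
      · have : (n:ℤ) ≤ m * n := by nlinarith
        omega
    rw [Fin.sum_univ_eq_sum_range (fun i => ζ ^ i) n, geom_sum_eq hζ1, hζn]
    simp [Matrix.one_apply, hjk]

lemma norm_dft_entry (n : ℕ) (j k : Fin n) : ‖dft n j k‖ = 1 / Real.sqrt n := by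
  have hz : -(2 * (Real.pi:ℂ) * Complex.I * (j : ℕ) * (k : ℕ)) / n
      = ((-(2 * Real.pi * (j:ℕ) * (k:ℕ)) / n : ℝ) : ℂ) * Complex.I := by
    push_cast; ring
  rw [dft]
  simp only [norm_mul, Complex.norm_real, hz]
  rw [Complex.norm_exp_ofReal_mul_I]
  simp [abs_of_nonneg (by positivity : (0:ℝ) ≤ 1 / Real.sqrt n)]

lemma moorePenrose_unique {ι κ : Type*} [Fintype ι] [Fintype κ] [DecidableEq ι] [DecidableEq κ]
    (A : Matrix ι κ ℂ) (B C : Matrix κ ι ℂ)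
    (hB : IsMoorePenrose A B) (hC : IsMoorePenrose A C) : B = C := by
  obtain ⟨hB1, hB2, hB3, hB4⟩ := hB
  obtain ⟨hC1, hC2, hC3, hC4⟩ := hC
  have hAB : A * B = A * C := by
    calc A * B = (A * B)ᴴ := hB3.symm
      _ = Bᴴ * Aᴴ := Matrix.conjTranspose_mul _ _
      _ = Bᴴ * (A * C * A)ᴴ := by rw [hC1]
      _ = Bᴴ * (Aᴴ * (A * C)ᴴ) := by rw [Matrix.conjTranspose_mul]
      _ = Bᴴ * (Aᴴ * (A * C)) := by rw [hC3]
      _ = (Bᴴ * Aᴴ) * (A * C) := by rw [Matrix.mul_assoc]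
      _ = (A * B)ᴴ * (A * C) := by rw [Matrix.conjTranspose_mul]
      _ = (A * B) * (A * C) := by rw [hB3]
      _ = ((A * B) * A) * C := by simp only [Matrix.mul_assoc]
      _ = A * C := by rw [hB1]
  have hBA : B * A = C * A := by
    calc B * A = (B * A)ᴴ := hB4.symm
      _ = Aᴴ * Bᴴ := Matrix.conjTranspose_mul _ _
      _ = (A * C * A)ᴴ * Bᴴ := by rw [hC1]
      _ = ((C * A)ᴴ * Aᴴ) * Bᴴ := by rw [Matrix.mul_assoc, Matrix.conjTranspose_mul]
      _ = ((C * A) * Aᴴ) * Bᴴ := by rw [hC4]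
      _ = (C * A) * (Aᴴ * Bᴴ) := by rw [Matrix.mul_assoc]
      _ = (C * A) * (B * A)ᴴ := by rw [Matrix.conjTranspose_mul]
      _ = (C * A) * (B * A) := by rw [hB4]
      _ = C * ((A * B) * A) := by simp only [Matrix.mul_assoc]
      _ = C * A := by rw [hB1]
  calc B = B * A * B := hB2.symm
    _ = (C * A) * B := by rw [hBA]
    _ = C * (A * B) := Matrix.mul_assoc _ _ _
    _ = C * (A * C) := by rw [hAB]
    _ = C * A * C := (Matrix.mul_assoc _ _ _).symm
    _ = C := hC2


/-- Theorem 15 (uniform sampling density for an injective union of circulant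
transforms, with the groups `𝒢_k = {(j−1)n + k : j ∈ [ℓ]}` encoded as `{(j, k) : j ∈ Fin ℓ}`
via the index identification `Fin ℓ × Fin n ≃ Fin (ℓ n)`). -/
theorem circulant_union_uniform_density
    (n l : ℕ) (hn : 0 < n) (hl : 0 < l) (γ : ℝ) (hγ : 0 < γ)
    (φ lb : Fin l → Fin n → ℂ)
    (hlb : ∀ j, lb j = fun k => ((Real.sqrt n : ℝ) : ℂ) * (dft n).mulVec (φ j) k)
    (hinjective : ∀ k, 0 < ∑ j, ‖lb j k‖ ^ 2)
    (T : Matrix (Fin l × Fin n) (Fin n) ℂ)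
    (hT : T = fun p k =>
      (((dft n)ᴴ * Matrix.diagonal (lb p.1) * dft n) * (dft n)ᴴ) p.2 k)
    (Tdag : Matrix (Fin n) (Fin l × Fin n) ℂ)
    (hTdag : IsMoorePenrose T Tdag) :
    (∀ k : Fin n,
        ((n : ℝ) * γ * ⨆ k' : Fin n, ∑ j : Fin l, ‖T (j, k') k‖ ^ 2) =
          γ * ∑ j, ‖lb j k‖ ^ 2 ∧
        ((n : ℝ) * γ⁻¹ * ⨆ k' : Fin n, ∑ j : Fin l, ‖Tdagᴴ (j, k') k‖ ^ 2) =
          γ⁻¹ * (∑ j, ‖lb j k‖ ^ 2)⁻¹) ∧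
    (∀ k : Fin n,
        ((n : ℝ) * γ * ⨆ k' : Fin n, ∑ j : Fin l, ‖T (j, k') k‖ ^ 2) *
          ((n : ℝ) * γ⁻¹ * ⨆ k' : Fin n, ∑ j : Fin l, ‖Tdagᴴ (j, k') k‖ ^ 2) = 1) ∧
    (∀ k : Fin n,
        Real.sqrt (((n : ℝ) * γ * ⨆ k' : Fin n, ∑ j : Fin l, ‖T (j, k') k‖ ^ 2) *
            ((n : ℝ) * γ⁻¹ * ⨆ k' : Fin n, ∑ j : Fin l, ‖Tdagᴴ (j, k') k‖ ^ 2)) /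
          (∑ k'' : Fin n,
            Real.sqrt (((n : ℝ) * γ * ⨆ k' : Fin n, ∑ j : Fin l, ‖T (j, k') k''‖ ^ 2) *
              ((n : ℝ) * γ⁻¹ * ⨆ k' : Fin n, ∑ j : Fin l, ‖Tdagᴴ (j, k') k''‖ ^ 2))) =
          1 / n) := by
  have hnR : (n : ℝ) ≠ 0 := Nat.cast_ne_zero.mpr hn.ne'
  have hnC : (n : ℂ) ≠ 0 := Nat.cast_ne_zero.mpr hn.ne'
  haveI : Nonempty (Fin n) := ⟨⟨0, hn⟩⟩
  have hunit := dft_mul_conjTranspose n hn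
  -- entries of T
  have hTe : ∀ (j : Fin l) (m k : Fin n),
      T (j, m) k = (starRingEnd ℂ) (dft n k m) * lb j k := by
    intro j m k
    rw [hT]
    have hM : ((dft n)ᴴ * Matrix.diagonal (lb j) * dft n) * (dft n)ᴴ
        = (dft n)ᴴ * Matrix.diagonal (lb j) := by
      rw [Matrix.mul_assoc, hunit, Matrix.mul_one]
    show (((dft n)ᴴ * Matrix.diagonal (lb j) * dft n) * (dft n)ᴴ) m k = _
    rw [hM, Matrix.mul_diagonal, Matrix.conjTranspose_apply]
    rfl
  -- squared norms of entries of T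
  have hTnorm : ∀ (j : Fin l) (m k : Fin n),
      ‖T (j, m) k‖ ^ 2 = ‖lb j k‖ ^ 2 / n := by
    intro j m k
    rw [hTe, norm_mul, RCLike.norm_conj, norm_dft_entry, mul_pow, div_pow, one_pow,
      Real.sq_sqrt (by positivity : (0:ℝ) ≤ (n:ℝ))]
    ring
  have hTsum : ∀ (m k : Fin n),
      (∑ j : Fin l, ‖T (j, m) k‖ ^ 2) = (∑ j, ‖lb j k‖ ^ 2) / n := by
    intro m k
    rw [Finset.sum_div]
    exact Finset.sum_congr rfl fun j _ => hTnorm j m k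
  have hsupT : ∀ k : Fin n,
      (⨆ k' : Fin n, ∑ j : Fin l, ‖T (j, k') k‖ ^ 2) = (∑ j, ‖lb j k‖ ^ 2) / n := by
    intro k
    simp only [hTsum]
    exact ciSup_const
  -- T^H T is diagonal
  have hU : ∀ a b : Fin n,
      (∑ m : Fin n, dft n a m * (starRingEnd ℂ) (dft n b m))
        = (1 : Matrix (Fin n) (Fin n) ℂ) a b := by
    intro a b
    have := congrFun (congrFun hunit a) b
    rw [Matrix.mul_apply] at this
    simpa [Matrix.conjTranspose_apply, Complex.star_def] using this
  have hTT : Tᴴ * T = Matrix.diagonal (fun k => ((∑ j, ‖lb j k‖ ^ 2 : ℝ) : ℂ)) := by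
    ext k k'
    rw [Matrix.mul_apply, Fintype.sum_prod_type]
    have hstep : ∀ j : Fin l, (∑ m : Fin n, Tᴴ k (j, m) * T (j, m) k')
        = ((starRingEnd ℂ) (lb j k) * lb j k') * ((1 : Matrix (Fin n) (Fin n) ℂ) k k') := by
      intro j
      have h1 : ∀ m : Fin n, Tᴴ k (j, m) * T (j, m) k'
          = ((starRingEnd ℂ) (lb j k) * lb j k')
            * (dft n k m * (starRingEnd ℂ) (dft n k' m)) := by
        intro m
        rw [Matrix.conjTranspose_apply, hTe j m k, hTe j m k']
        simp only [Complex.star_def, map_mul, Complex.conj_conj]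
        ring
      rw [Finset.sum_congr rfl fun m _ => h1 m, ← Finset.mul_sum, hU]
    rw [Finset.sum_congr rfl fun j _ => hstep j, ← Finset.sum_mul]
    by_cases hkk : k = k'
    · subst hkk
      simp only [Matrix.one_apply_eq, mul_one, Matrix.diagonal_apply_eq]
      push_cast
      refine Finset.sum_congr rfl fun j _ => ?_
      rw [mul_comm, Complex.mul_conj, Complex.normSq_eq_norm_sq]
      push_cast
      ring
    · rw [Matrix.one_apply_ne hkk, Matrix.diagonal_apply_ne _ hkk, mul_zero]
  -- the pseudoinverse is explicitly diagonal⁻¹ * Tᴴ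
  have hσpos : ∀ k, (0:ℝ) < ∑ j, ‖lb j k‖ ^ 2 := hinjective
  have hσC : ∀ k, ((∑ j, ‖lb j k‖ ^ 2 : ℝ) : ℂ) ≠ 0 := fun k => by
    exact_mod_cast (hσpos k).ne'
  set Dinv : Matrix (Fin n) (Fin n) ℂ :=
    Matrix.diagonal (fun k => ((∑ j, ‖lb j k‖ ^ 2 : ℝ) : ℂ)⁻¹) with hDinv
  set C : Matrix (Fin n) (Fin l × Fin n) ℂ := Dinv * Tᴴ with hC
  have hCT : C * T = 1 := by
    rw [hC, Matrix.mul_assoc, hTT, hDinv, Matrix.diagonal_mul_diagonal]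
    have : (fun k => ((∑ j, ‖lb j k‖ ^ 2 : ℝ) : ℂ)⁻¹ * ((∑ j, ‖lb j k‖ ^ 2 : ℝ) : ℂ))
        = fun _ => (1:ℂ) := funext fun k => inv_mul_cancel₀ (hσC k)
    rw [this, Matrix.diagonal_one]
  have hDh : Dinvᴴ = Dinv := by
    have hstar : (star fun k : Fin n => ((∑ j, ‖lb j k‖ ^ 2 : ℝ) : ℂ)⁻¹)
        = (fun k : Fin n => ((∑ j, ‖lb j k‖ ^ 2 : ℝ) : ℂ)⁻¹) := by
      funext k
      simp [Pi.star_apply, Complex.star_def, map_inv₀, Complex.conj_ofReal]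
    rw [hDinv, Matrix.diagonal_conjTranspose, hstar]
  have hMPC : IsMoorePenrose T C := by
    refine ⟨?_, ?_, ?_, ?_⟩
    · rw [Matrix.mul_assoc, hCT, Matrix.mul_one]
    · rw [hCT, Matrix.one_mul]
    · rw [hC, Matrix.conjTranspose_mul, Matrix.conjTranspose_mul,
        Matrix.conjTranspose_conjTranspose, hDh, Matrix.mul_assoc]
    · rw [hCT]; simp
  have hTdagC : Tdag = C := moorePenrose_unique T Tdag C hTdag hMPC
  -- entries of Tdagᴴ
  have hCe : ∀ (j : Fin l) (m k : Fin n),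
      Tdagᴴ (j, m) k = ((∑ j', ‖lb j' k‖ ^ 2 : ℝ) : ℂ)⁻¹ * T (j, m) k := by
    intro j m k
    rw [Matrix.conjTranspose_apply, hTdagC, hC, hDinv, Matrix.diagonal_mul,
      Matrix.conjTranspose_apply]
    simp [Complex.star_def, Complex.conj_ofReal]
  have hCnorm : ∀ (j : Fin l) (m k : Fin n),
      ‖Tdagᴴ (j, m) k‖ ^ 2 = ((∑ j', ‖lb j' k‖ ^ 2)⁻¹) ^ 2 * ‖T (j, m) k‖ ^ 2 := by
    intro j m k
    rw [hCe, norm_mul, mul_pow]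
    congr 2
    rw [norm_inv, Complex.norm_real, Real.norm_eq_abs,
      abs_of_nonneg (hσpos k).le]
  have hCsum : ∀ (m k : Fin n),
      (∑ j : Fin l, ‖Tdagᴴ (j, m) k‖ ^ 2) = (∑ j, ‖lb j k‖ ^ 2)⁻¹ / n := by
    intro m k
    have : (∑ j : Fin l, ‖Tdagᴴ (j, m) k‖ ^ 2)
        = ((∑ j', ‖lb j' k‖ ^ 2)⁻¹) ^ 2 * ∑ j : Fin l, ‖T (j, m) k‖ ^ 2 := by
      rw [Finset.mul_sum]
      exact Finset.sum_congr rfl fun j _ => hCnorm j m k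
    rw [this, hTsum]
    have hs := (hσpos k).ne'
    calc ((∑ j', ‖lb j' k‖ ^ 2)⁻¹) ^ 2 * ((∑ j, ‖lb j k‖ ^ 2) / n)
        = ((∑ j, ‖lb j k‖ ^ 2)⁻¹ * (∑ j, ‖lb j k‖ ^ 2)) * ((∑ j, ‖lb j k‖ ^ 2)⁻¹ / n) := by
          ring
      _ = (∑ j, ‖lb j k‖ ^ 2)⁻¹ / n := by rw [inv_mul_cancel₀ hs, one_mul]
  have hsupC : ∀ k : Fin n,
      (⨆ k' : Fin n, ∑ j : Fin l, ‖Tdagᴴ (j, k') k‖ ^ 2)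
        = (∑ j, ‖lb j k‖ ^ 2)⁻¹ / n := by
    intro k
    simp only [hCsum]
    exact ciSup_const
  have hμ : ∀ k : Fin n,
      ((n : ℝ) * γ * ⨆ k' : Fin n, ∑ j : Fin l, ‖T (j, k') k‖ ^ 2)
        = γ * ∑ j, ‖lb j k‖ ^ 2 := by
    intro k
    rw [hsupT k]
    calc (n : ℝ) * γ * ((∑ j, ‖lb j k‖ ^ 2) / n)
        = γ * (((∑ j, ‖lb j k‖ ^ 2) / n) * n) := by ring
      _ = γ * ∑ j, ‖lb j k‖ ^ 2 := by rw [div_mul_cancel₀ _ hnR]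
  have hμt : ∀ k : Fin n,
      ((n : ℝ) * γ⁻¹ * ⨆ k' : Fin n, ∑ j : Fin l, ‖Tdagᴴ (j, k') k‖ ^ 2)
        = γ⁻¹ * (∑ j, ‖lb j k‖ ^ 2)⁻¹ := by
    intro k
    rw [hsupC k]
    calc (n : ℝ) * γ⁻¹ * ((∑ j, ‖lb j k‖ ^ 2)⁻¹ / n)
        = γ⁻¹ * (((∑ j, ‖lb j k‖ ^ 2)⁻¹ / n) * n) := by ring
      _ = γ⁻¹ * (∑ j, ‖lb j k‖ ^ 2)⁻¹ := by rw [div_mul_cancel₀ _ hnR]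
  have hprod : ∀ k : Fin n,
      ((n : ℝ) * γ * ⨆ k' : Fin n, ∑ j : Fin l, ‖T (j, k') k‖ ^ 2) *
        ((n : ℝ) * γ⁻¹ * ⨆ k' : Fin n, ∑ j : Fin l, ‖Tdagᴴ (j, k') k‖ ^ 2) = 1 := by
    intro k
    rw [hμ k, hμt k]
    have h1 : γ * (∑ j, ‖lb j k‖ ^ 2) * (γ⁻¹ * (∑ j, ‖lb j k‖ ^ 2)⁻¹)
        = (γ * γ⁻¹) * ((∑ j, ‖lb j k‖ ^ 2) * (∑ j, ‖lb j k‖ ^ 2)⁻¹) := by ring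
    rw [h1, mul_inv_cancel₀ hγ.ne', mul_inv_cancel₀ (hσpos k).ne', one_mul]
  refine ⟨fun k => ⟨hμ k, hμt k⟩, hprod, fun k => ?_⟩
  simp only [hprod, Real.sqrt_one, Finset.sum_const, Finset.card_univ, Fintype.card_fin,
    nsmul_eq_mul, mul_one]


end TSR
end
end

section
/- Let Ψ ∈ ℂ^{n×n} be the unitary DFT matrix and Φ = Ψ* diag(λ) Ψ a circulant matrix whose spectrum satisfies λ[k] = 0 for k ∈ [n₀] and λ[k] ≠ 0 for k ∈ {n₀+1,…,n}, where n₀ < n. Set T = Φ Ψ* and restrict to the nonzero columns, i.e. consider T' = T[e_{n₀+1},…,e_n] and T̃' = ((T')†)*, with local incoherence parameters μ_k = (n−n₀) γ ‖T' e_{k−n₀}‖_∞² and μ̃_k = (n−n₀) γ^{−1} ‖T̃' e_{k−n₀}‖_∞² for k ∈ {n₀+1,…,n} and any γ > 0. Then μ_k μ̃_k is the same for all k ∈ {n₀+1,…,n}, and the variable density sampling distribution P(ω = k) = √(μ_k μ̃_k)/Σ_{j=n₀+1}^n √(μ_j μ̃_j) is the uniform distribution on {n₀+1,…,n}, i.e.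 P(ω = k) = 1/(n−n₀) for each such k. -/
open scoped BigOperators ENNReal
open Classical MeasureTheory
open scoped Matrix

noncomputable section

namespace TSR

lemma dft_row_orth {n : ℕ} (hn : 0 < n) (a b : Fin n) :
    ∑ m : Fin n, dft n a m * (starRingEnd ℂ) (dft n b m) = if a = b then 1 else 0 := by
  have hn' : (n : ℂ) ≠ 0 := by exact_mod_cast hn.ne'
  have hπ : (Real.pi : ℂ) ≠ 0 := by exact_mod_cast Real.pi_ne_zero
  set ζ : ℂ := Complex.exp (2 * Real.pi * Complex.I * (((b : ℕ) : ℂ) - ((a : ℕ) : ℂ)) / n) with hζ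
  have hsq : ((1 / Real.sqrt n : ℝ) : ℂ) ^ 2 = ((n : ℂ))⁻¹ := by
    rw [← Complex.ofReal_pow, div_pow, one_pow, Real.sq_sqrt (Nat.cast_nonneg n)]
    simp
  have hterm : ∀ m : Fin n, dft n a m * (starRingEnd ℂ) (dft n b m)
      = ((1 / Real.sqrt n : ℝ) : ℂ) ^ 2 * ζ ^ (m : ℕ) := by
    intro m
    have e1 : (starRingEnd ℂ) (Complex.exp (-(2 * Real.pi * Complex.I * ((b:ℕ):ℂ) * ((m:ℕ):ℂ)) / n))
        = Complex.exp (2 * Real.pi * Complex.I * ((b:ℕ):ℂ) * ((m:ℕ):ℂ) / n) := by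
      rw [← Complex.exp_conj]
      congr 1
      simp [map_div₀, Complex.conj_I, map_ofNat]
    have e2 : Complex.exp (-(2 * Real.pi * Complex.I * ((a:ℕ):ℂ) * ((m:ℕ):ℂ)) / n) *
        Complex.exp (2 * Real.pi * Complex.I * ((b:ℕ):ℂ) * ((m:ℕ):ℂ) / n) = ζ ^ (m : ℕ) := by
      rw [hζ, ← Complex.exp_nat_mul, ← Complex.exp_add]
      congr 1
      field_simp
      ring
    simp only [dft, map_mul, Complex.conj_ofReal, e1]
    rw [show ∀ r x y : ℂ, (r * x) * (r * y) = r ^ 2 * (x * y) from fun r x y => by ring, e2]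
  rw [Finset.sum_congr rfl (fun m _ => hterm m), ← Finset.mul_sum, hsq]
  by_cases hab : a = b
  · subst hab
    have hζ1 : ζ = 1 := by simp [hζ]
    simp only [hζ1, one_pow, Finset.sum_const, Finset.card_univ, Fintype.card_fin,
      nsmul_eq_mul, mul_one, if_pos rfl]
    exact inv_mul_cancel₀ hn'
  · have hne : ζ ≠ 1 := by
      intro h
      rw [hζ, Complex.exp_eq_one_iff] at h
      obtain ⟨m, hm⟩ := h
      have h2 : (((b : ℕ) : ℂ) - ((a : ℕ) : ℂ)) = m * n := by
        have h2π : (2 * (Real.pi : ℂ) * Complex.I) ≠ 0 := by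
          simp [hπ, Complex.I_ne_zero]
        have hm' : 2 * (Real.pi:ℂ) * Complex.I * (((b:ℕ):ℂ) - ((a:ℕ):ℂ))
            = 2 * (Real.pi:ℂ) * Complex.I * ((m:ℂ) * n) := by
          field_simp at hm
          rw [hm]; ring
        exact mul_left_cancel₀ h2π hm'
      have h3 : ((b : ℕ) : ℤ) - ((a : ℕ) : ℤ) = m * n := by exact_mod_cast h2
      have hbn : ((b : ℕ) : ℤ) < (n : ℤ) := by exact_mod_cast b.2
      have han : ((a : ℕ) : ℤ) < (n : ℤ) := by exact_mod_cast a.2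
      have hb0 : (0 : ℤ) ≤ ((b : ℕ) : ℤ) := by positivity
      have ha0 : (0 : ℤ) ≤ ((a : ℕ) : ℤ) := by positivity
      have hnz : (0 : ℤ) < (n : ℤ) := by exact_mod_cast hn
      rcases lt_trichotomy m 0 with h|h|h
      · have hm1 : m ≤ -1 := by omega
        nlinarith
      · rw [h] at h3
        apply hab
        apply Fin.ext
        have : ((b : ℕ) : ℤ) = ((a : ℕ) : ℤ) := by omega
        exact_mod_cast this.symm
      · have hm1 : 1 ≤ m := h
        nlinarith
    have hpow : ζ ^ n = 1 := by
      rw [hζ, ← Complex.exp_nat_mul]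
      have : (n:ℂ) * (2 * Real.pi * Complex.I * (((b:ℕ):ℂ) - ((a:ℕ):ℂ)) / n)
          = ((((b:ℕ):ℤ) - ((a:ℕ):ℤ) : ℤ) : ℂ) * (2 * Real.pi * Complex.I) := by
        push_cast
        field_simp
      rw [this, Complex.exp_int_mul_two_pi_mul_I]
    have hs : ∑ m : Fin n, ζ ^ (m : ℕ) = 0 := by
      rw [Fin.sum_univ_eq_sum_range (fun i => ζ ^ i), geom_sum_eq hne, hpow]
      simp
    simp [hs, hab]

lemma mp_unique {ι κ : Type*} [Fintype ι] [Fintype κ] [DecidableEq ι] [DecidableEq κ]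
    {A : Matrix ι κ ℂ} {B C : Matrix κ ι ℂ}
    (hB : IsMoorePenrose A B) (hC : IsMoorePenrose A C) : B = C := by
  obtain ⟨hB1, hB2, hB3, hB4⟩ := hB
  obtain ⟨hC1, hC2, hC3, hC4⟩ := hC
  have hAB : A * B = A * C := by
    calc A * B = (A * B)ᴴ := hB3.symm
    _ = Bᴴ * Aᴴ := by rw [Matrix.conjTranspose_mul]
    _ = Bᴴ * (A * C * A)ᴴ := by rw [hC1]
    _ = Bᴴ * (Aᴴ * (A * C)ᴴ) := by rw [Matrix.conjTranspose_mul]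
    _ = Bᴴ * (Aᴴ * (A * C)) := by rw [hC3]
    _ = (Bᴴ * Aᴴ) * (A * C) := by rw [Matrix.mul_assoc]
    _ = (A * B)ᴴ * (A * C) := by rw [Matrix.conjTranspose_mul]
    _ = (A * B) * (A * C) := by rw [hB3]
    _ = (A * B * A) * C := by simp only [Matrix.mul_assoc]
    _ = A * C := by rw [hB1]
  have hBA : B * A = C * A := by
    calc B * A = (B * A)ᴴ := hB4.symm
    _ = Aᴴ * Bᴴ := by rw [Matrix.conjTranspose_mul]
    _ = (A * C * A)ᴴ * Bᴴ := by rw [hC1]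
    _ = (C * A)ᴴ * Aᴴ * Bᴴ := by simp only [Matrix.conjTranspose_mul, Matrix.mul_assoc]
    _ = (C * A) * Aᴴ * Bᴴ := by rw [hC4]
    _ = (C * A) * (Aᴴ * Bᴴ) := by rw [Matrix.mul_assoc]
    _ = (C * A) * (B * A)ᴴ := by rw [Matrix.conjTranspose_mul]
    _ = (C * A) * (B * A) := by rw [hB4]
    _ = C * (A * B * A) := by simp only [Matrix.mul_assoc]
    _ = C * A := by rw [hB1]
  calc B = B * A * B := hB2.symm
  _ = C * A * B := by rw [hBA]
  _ = C * (A * B) := by rw [Matrix.mul_assoc]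
  _ = C * (A * C) := by rw [hAB]
  _ = C * A * C := by rw [Matrix.mul_assoc]
  _ = C := hC2


/-- Corollary 1 (uniform sampling density on the non-null frequencies for a
non-injective circulant transform, e.g. 1D total variation). -/
theorem circulant_noninjective_uniform_density
    (n n₀ : ℕ) (hn₀ : 0 < n₀) (hlt : n₀ < n) (γ : ℝ) (hγ : 0 < γ)
    (φ lb : Fin n → ℂ)
    (hlb : lb = fun k => ((Real.sqrt n : ℝ) : ℂ) * (dft n).mulVec φ k)
    (hzero : ∀ k : Fin n, (k : ℕ) < n₀ → lb k = 0)
    (hnz : ∀ k : Fin n, n₀ ≤ (k : ℕ) → lb k ≠ 0)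
    (T : Matrix (Fin n) (Fin n) ℂ)
    (hT : T = ((dft n)ᴴ * Matrix.diagonal lb * dft n) * (dft n)ᴴ)
    (T' : Matrix (Fin n) (Fin (n - n₀)) ℂ)
    (hT' : ∀ (i : Fin n) (k : Fin (n - n₀)),
      T' i k = T i ⟨n₀ + (k : ℕ), by have := k.2; omega⟩)
    (Tdag' : Matrix (Fin (n - n₀)) (Fin n) ℂ)
    (hTdag' : IsMoorePenrose T' Tdag') :
    (∀ k k' : Fin (n - n₀),
        locIncoh γ T' k * locIncoh γ⁻¹ Tdag'ᴴ k =
          locIncoh γ T' k' * locIncoh γ⁻¹ Tdag'ᴴ k') ∧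
    (∀ k : Fin (n - n₀),
        vdWeight γ T' Tdag'ᴴ k / ∑ j, vdWeight γ T' Tdag'ᴴ j =
          1 / ((n - n₀ : ℕ) : ℝ)) := by
  have hn : 0 < n := lt_of_le_of_lt (Nat.zero_le _) hlt
  have hn' : (0:ℝ) < n := by exact_mod_cast hn
  have hsn : (0:ℝ) < Real.sqrt n := Real.sqrt_pos.mpr hn'
  -- the embedded index
  set kk : Fin (n - n₀) → Fin n := fun k => ⟨n₀ + (k : ℕ), by have := k.2; omega⟩ with hkk
  -- unitarity
  have hU : dft n * (dft n)ᴴ = 1 := by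
    ext a b
    simpa [Matrix.mul_apply, Matrix.conjTranspose_apply, Matrix.one_apply]
      using dft_row_orth hn a b
  -- entries of T
  have hTm : T = (dft n)ᴴ * Matrix.diagonal lb := by
    rw [hT, Matrix.mul_assoc, hU, Matrix.mul_one]
  have hTe : ∀ (i k : Fin n), T i k = (starRingEnd ℂ) (dft n k i) * lb k := by
    intro i k
    rw [hTm, Matrix.mul_diagonal, Matrix.conjTranspose_apply]
    rfl
  have hT'e : ∀ (i : Fin n) (k : Fin (n - n₀)),
      T' i k = (starRingEnd ℂ) (dft n (kk k) i) * lb (kk k) := by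
    intro i k
    rw [hT' i k]
    exact hTe i (kk k)
  -- norm of dft entries
  have hdnorm : ∀ a b : Fin n, ‖dft n a b‖ = (Real.sqrt n)⁻¹ := by
    intro a b
    have harg : -(2 * (Real.pi:ℂ) * Complex.I * ((a:ℕ):ℂ) * ((b:ℕ):ℂ)) / n
        = ((-(2 * Real.pi * (a:ℕ) * (b:ℕ) / n) : ℝ) : ℂ) * Complex.I := by
      push_cast
      ring
    rw [dft, harg, norm_mul,
      Complex.norm_exp_ofReal_mul_I, Complex.norm_real, Real.norm_eq_abs, mul_one, abs_of_nonneg (by positivity)]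
    rw [one_div]
  -- norm of T' entries
  have hT'norm : ∀ (i : Fin n) (k : Fin (n - n₀)),
      ‖T' i k‖ = (Real.sqrt n)⁻¹ * ‖lb (kk k)‖ := by
    intro i k
    rw [hT'e i k, norm_mul, RCLike.norm_conj, hdnorm]
  -- nonvanishing
  have hlbnz : ∀ k : Fin (n - n₀), lb (kk k) ≠ 0 := by
    intro k
    exact hnz (kk k) (by simp [hkk])
  -- Gram matrix
  set d : Fin (n - n₀) → ℂ := fun k => ((‖lb (kk k)‖ ^ 2 : ℝ) : ℂ) with hd
  have hdnz : ∀ k, d k ≠ 0 := by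
    intro k
    simp only [hd]
    exact_mod_cast pow_ne_zero 2 (norm_ne_zero_iff.mpr (hlbnz k))
  have hGram : T'ᴴ * T' = Matrix.diagonal d := by
    ext k k'
    rw [Matrix.mul_apply]
    have : ∀ i, (T'ᴴ) k i * T' i k'
        = ((starRingEnd ℂ) (lb (kk k)) * lb (kk k')) *
          (dft n (kk k) i * (starRingEnd ℂ) (dft n (kk k') i)) := by
      intro i
      rw [Matrix.conjTranspose_apply, hT'e i k, hT'e i k']
      simp only [star_mul', RCLike.star_def, Complex.conj_conj]
      ring
    rw [Finset.sum_congr rfl (fun i _ => this i), ← Finset.mul_sum, dft_row_orth hn]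
    by_cases hkk' : k = k'
    · subst hkk'
      simp only [if_pos rfl, mul_one, Matrix.diagonal_apply_eq, hd]
      rw [Complex.conj_mul']
      norm_cast
      simp
    · have : kk k ≠ kk k' := by
        intro h
        apply hkk'
        apply Fin.ext
        have := Fin.val_eq_of_eq h
        simp only [hkk] at this
        omega
      rw [if_neg this, mul_zero, Matrix.diagonal_apply_ne _ hkk']
  -- explicit pseudoinverse
  set B : Matrix (Fin (n - n₀)) (Fin n) ℂ :=
    Matrix.diagonal (fun k => (d k)⁻¹) * T'ᴴ with hB
  have hBT : B * T' = 1 := by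
    rw [hB, Matrix.mul_assoc, hGram, Matrix.diagonal_mul_diagonal]
    have h1 : (fun i => (d i)⁻¹ * d i) = fun _ => (1:ℂ) :=
      funext fun k => inv_mul_cancel₀ (hdnz k)
    rw [h1, Matrix.diagonal_one]
  have hdiaginv_herm : (Matrix.diagonal (fun k => (d k)⁻¹))ᴴ
      = Matrix.diagonal (fun k => (d k)⁻¹) := by
    have hstar : (star fun k => (d k)⁻¹) = fun k => (d k)⁻¹ := by
      funext k
      simp only [Pi.star_apply, hd, RCLike.star_def, map_inv₀, Complex.conj_ofReal]
    rw [Matrix.diagonal_conjTranspose, hstar]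
  have hBmp : IsMoorePenrose T' B := by
    refine ⟨?_, ?_, ?_, ?_⟩
    · rw [Matrix.mul_assoc, hBT, Matrix.mul_one]
    · rw [hBT, Matrix.one_mul]
    · have : T' * B = T' * Matrix.diagonal (fun k => (d k)⁻¹) * T'ᴴ := by
        rw [hB, Matrix.mul_assoc]
      rw [this, Matrix.conjTranspose_mul, Matrix.conjTranspose_mul,
        Matrix.conjTranspose_conjTranspose, hdiaginv_herm, Matrix.mul_assoc]
    · rw [hBT, Matrix.conjTranspose_one]
  have hTd : Tdag' = B := mp_unique hTdag' hBmp
  -- entries of Tdag'ᴴ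
  have hTdage : ∀ (i : Fin n) (k : Fin (n - n₀)),
      Tdag'ᴴ i k = (d k)⁻¹ * T' i k := by
    intro i k
    rw [Matrix.conjTranspose_apply, hTd, hB, Matrix.diagonal_mul, Matrix.conjTranspose_apply,
      star_mul', star_star]
    congr 1
    simp only [hd, RCLike.star_def, map_inv₀, Complex.conj_ofReal]
  have hTdagnorm : ∀ (i : Fin n) (k : Fin (n - n₀)),
      ‖Tdag'ᴴ i k‖ = (‖lb (kk k)‖ ^ 2)⁻¹ * ((Real.sqrt n)⁻¹ * ‖lb (kk k)‖) := by
    intro i k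
    rw [hTdage i k, norm_mul, norm_inv, hT'norm i k]
    congr 2
    simp [hd]
  -- sup norms of columns
  have hne : Nonempty (Fin n) := ⟨⟨0, hn⟩⟩
  have hlinf1 : ∀ k : Fin (n - n₀),
      linfnorm (fun i => T' i k) = (Real.sqrt n)⁻¹ * ‖lb (kk k)‖ := by
    intro k
    unfold linfnorm
    rw [show (fun i => ‖T' i k‖) = fun _ : Fin n => (Real.sqrt n)⁻¹ * ‖lb (kk k)‖ from
      funext fun i => hT'norm i k]
    exact ciSup_const
  have hlinf2 : ∀ k : Fin (n - n₀),
      linfnorm (fun i => Tdag'ᴴ i k)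
        = (‖lb (kk k)‖ ^ 2)⁻¹ * ((Real.sqrt n)⁻¹ * ‖lb (kk k)‖) := by
    intro k
    unfold linfnorm
    rw [show (fun i => ‖Tdag'ᴴ i k‖)
        = fun _ : Fin n => (‖lb (kk k)‖ ^ 2)⁻¹ * ((Real.sqrt n)⁻¹ * ‖lb (kk k)‖) from
      funext fun i => hTdagnorm i k]
    exact ciSup_const
  -- the constant product
  have hprod : ∀ k : Fin (n - n₀),
      locIncoh γ T' k * locIncoh γ⁻¹ Tdag'ᴴ k
        = (((n - n₀ : ℕ) : ℝ) / n) ^ 2 := by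
    intro k
    have hs : 0 < ‖lb (kk k)‖ := norm_pos_iff.mpr (hlbnz k)
    unfold locIncoh
    rw [hlinf1 k, hlinf2 k]
    have h2 : (Real.sqrt n) ^ 2 = (n : ℝ) := Real.sq_sqrt (le_of_lt hn')
    set a := ‖lb (kk k)‖
    set s := Real.sqrt n
    have key : (s⁻¹ * a) ^ 2 * ((a ^ 2)⁻¹ * (s⁻¹ * a)) ^ 2 = ((s ^ 2)⁻¹) ^ 2 := by
      field_simp
    calc ((n - n₀ : ℕ) : ℝ) * γ * (s⁻¹ * a) ^ 2 *
          (((n - n₀ : ℕ) : ℝ) * γ⁻¹ * ((a ^ 2)⁻¹ * (s⁻¹ * a)) ^ 2)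
        = ((n - n₀ : ℕ) : ℝ) * ((n - n₀ : ℕ) : ℝ) * (γ * γ⁻¹) *
          ((s⁻¹ * a) ^ 2 * ((a ^ 2)⁻¹ * (s⁻¹ * a)) ^ 2) := by ring
      _ = ((n - n₀ : ℕ) : ℝ) * ((n - n₀ : ℕ) : ℝ) * 1 * (((n:ℝ))⁻¹) ^ 2 := by
          rw [key, h2, mul_inv_cancel₀ hγ.ne']
      _ = (((n - n₀ : ℕ) : ℝ) / n) ^ 2 := by
          rw [div_eq_mul_inv, mul_pow]
          ring
  have he : (0:ℝ) < ((n - n₀ : ℕ) : ℝ) := by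
    have : 0 < n - n₀ := by omega
    exact_mod_cast this
  have hw : ∀ k : Fin (n - n₀), vdWeight γ T' Tdag'ᴴ k = ((n - n₀ : ℕ) : ℝ) / n := by
    intro k
    unfold vdWeight
    rw [hprod k]
    exact Real.sqrt_sq (by positivity)
  constructor
  · intro k k'
    rw [hprod k, hprod k']
  · intro k
    rw [hw k, Finset.sum_congr rfl (fun j _ => hw j), Finset.sum_const,
      Finset.card_univ, Fintype.card_fin, nsmul_eq_mul]
    rw [div_eq_div_iff (by positivity) he.ne']
    field_simp


end TSR
end
end

section
/- Let Ψ ∈ ℂ^{n×n} be the unitary DFT matrix and Φ = [Φ_1ᵀ,…,Φ_ℓᵀ]ᵀ ∈ ℂ^{L×n} a concatenation of circulant matrices Φ_j = Ψ* diag(λ_j) Ψ, whose spectra satisfy λ_j[k] = 0 for all j ∈ [ℓ] and k ∈ [n₀], and Σ_{j=1}^ℓ |λ_j[k]|² > 0 for k ∈ {n₀+1,…,n}, where n₀ < n. Let 𝒢 = {𝒢_1,…,𝒢_n} with 𝒢_k = {(j−1)n+k : j ∈ [ℓ]}. Set T = Φ Ψ* and restrict to the nonzero columns T' = T[e_{n₀+1},…,e_n],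 T̃' = ((T')†)*, and for any γ > 0 define μ_{𝒢,k} = (n−n₀) γ max_{k'} ‖Π_{𝒢_{k'}} T' e_{k−n₀}‖_2² and μ̃_{𝒢,k} = (n−n₀) γ^{−1} max_{k'} ‖Π_{𝒢_{k'}} T̃' e_{k−n₀}‖_2² for k ∈ {n₀+1,…,n}. Then μ_{𝒢,k} μ̃_{𝒢,k} is the same for all k ∈ {n₀+1,…,n}, and the group variable density sampling distribution P(ω = k) = √(μ_{𝒢,k} μ̃_{𝒢,k})/Σ_{j=n₀+1}^n √(μ_{𝒢,j} μ̃_{𝒢,j}) is the uniform distribution on {n₀+1,…,n}. -/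
open scoped BigOperators ENNReal
open Classical MeasureTheory
open scoped Matrix

noncomputable section

namespace TSR

lemma dft_norm {n : ℕ} (hn : 0 < n) (j k : Fin n) :
    ‖dft n j k‖ ^ 2 = (n : ℝ)⁻¹ := by
  have h : (-(2 * Real.pi * Complex.I * (j : ℕ) * (k : ℕ)) / n : ℂ)
      = ((-(2 * Real.pi * (j:ℕ) * (k:ℕ) / n) : ℝ) : ℂ) * Complex.I := by
    push_cast; ring
  rw [dft, h]
  rw [norm_mul, Complex.norm_exp_ofReal_mul_I]
  have hs : Real.sqrt n > 0 := Real.sqrt_pos.2 (by positivity)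
  rw [Complex.norm_real]
  rw [Real.norm_eq_abs, abs_of_pos (by positivity)]
  rw [mul_one, div_pow, one_pow, Real.sq_sqrt (by positivity)]
  simp

lemma dft_unitary {n : ℕ} (hn : 0 < n) : dft n * (dft n)ᴴ = 1 := by
  ext j k
  rw [Matrix.mul_apply]
  set ζ : ℂ := Complex.exp (2 * Real.pi * Complex.I * (((k:ℕ):ℂ) - ((j:ℕ):ℂ)) / n) with hζ
  have hterm : ∀ p : Fin n, dft n j p * (dft n)ᴴ p k = ((n : ℂ))⁻¹ * ζ ^ (p : ℕ) := by
    intro p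
    simp only [Matrix.conjTranspose_apply, dft, Complex.star_def, map_mul]
    rw [← Complex.exp_conj]
    have h1 : (starRingEnd ℂ) ((1 / Real.sqrt n : ℝ) : ℂ) = ((1 / Real.sqrt n : ℝ) : ℂ) :=
      Complex.conj_ofReal _
    have h2 : (starRingEnd ℂ) (-(2 * Real.pi * Complex.I * (k : ℕ) * (p : ℕ)) / n)
        = (2 * Real.pi * Complex.I * (k : ℕ) * (p : ℕ)) / n := by
      simp [map_div₀, map_neg, map_mul, Complex.conj_I, Complex.conj_ofReal, map_ofNat]
    rw [h1, h2]
    have hsq : ((1 / Real.sqrt n : ℝ) : ℂ) * ((1 / Real.sqrt n : ℝ) : ℂ) = ((n:ℂ))⁻¹ := by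
      rw [← Complex.ofReal_mul]
      rw [div_mul_div_comm, one_mul, Real.mul_self_sqrt (by positivity)]
      push_cast
      simp
    have hexp : Complex.exp (-(2 * Real.pi * Complex.I * (j : ℕ) * (p : ℕ)) / n) *
        Complex.exp ((2 * Real.pi * Complex.I * (k : ℕ) * (p : ℕ)) / n) = ζ ^ (p:ℕ) := by
      rw [← Complex.exp_add, hζ, ← Complex.exp_nat_mul]
      congr 1
      have : (n:ℂ) ≠ 0 := Nat.cast_ne_zero.2 hn.ne'
      field_simp
      ring
    calc ((1 / Real.sqrt n : ℝ) : ℂ) * Complex.exp (-(2 * Real.pi * Complex.I * (j : ℕ) * (p : ℕ)) / n) *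
        (((1 / Real.sqrt n : ℝ) : ℂ) * Complex.exp ((2 * Real.pi * Complex.I * (k : ℕ) * (p : ℕ)) / n))
        = (((1 / Real.sqrt n : ℝ) : ℂ) * ((1 / Real.sqrt n : ℝ) : ℂ)) *
          (Complex.exp (-(2 * Real.pi * Complex.I * (j : ℕ) * (p : ℕ)) / n) *
           Complex.exp ((2 * Real.pi * Complex.I * (k : ℕ) * (p : ℕ)) / n)) := by ring
      _ = ((n : ℂ))⁻¹ * ζ ^ (p:ℕ) := by rw [hsq, hexp]
  rw [Finset.sum_congr rfl (fun p _ => hterm p), ← Finset.mul_sum]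
  have hn' : (n:ℂ) ≠ 0 := Nat.cast_ne_zero.2 hn.ne'
  by_cases hjk : j = k
  · subst hjk
    have : ζ = 1 := by rw [hζ]; simp
    simp [this, Matrix.one_apply]
    field_simp
  · have hne : ((k:ℕ):ℂ) - ((j:ℕ):ℂ) ≠ 0 := by
      intro h
      apply hjk
      have : ((k:ℕ):ℂ) = ((j:ℕ):ℂ) := by linear_combination h
      exact (Fin.ext (Nat.cast_injective this)).symm
    have hζn : ζ ^ n = 1 := by
      rw [hζ, ← Complex.exp_nat_mul]
      have : (n:ℂ) * (2 * Real.pi * Complex.I * (((k:ℕ):ℂ) - ((j:ℕ):ℂ)) / n)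
          = (((k:ℕ):ℤ) - ((j:ℕ):ℤ) : ℤ) * (2 * Real.pi * Complex.I) := by
        push_cast; field_simp
      rw [this, Complex.exp_int_mul_two_pi_mul_I]
    have hζ1 : ζ ≠ 1 := by
      intro h
      rw [hζ, Complex.exp_eq_one_iff] at h
      obtain ⟨m, hm⟩ := h
      have hπ : (2 * (Real.pi:ℂ) * Complex.I) ≠ 0 := by
        simp [Real.pi_ne_zero, Complex.I_ne_zero]
      have h2 : ((k:ℕ):ℂ) - ((j:ℕ):ℂ) = (m:ℂ) * n := by
        have := hm
        field_simp at this
        apply mul_left_cancel₀ hπ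
        linear_combination (2 * (Real.pi:ℂ) * Complex.I) * this
      have h3 : ((k:ℕ):ℤ) - ((j:ℕ):ℤ) = m * n := by
        exact_mod_cast h2
      have hk := k.2
      have hj := j.2
      have hne' : (k:ℕ) ≠ (j:ℕ) := fun h => hjk (Fin.ext h.symm)
      rcases lt_trichotomy m 0 with hm0 | hm0 | hm0
      · nlinarith [Int.ofNat_lt.2 hk, Int.ofNat_lt.2 hj]
      · simp [hm0] at h3; omega
      · nlinarith [Int.ofNat_lt.2 hk, Int.ofNat_lt.2 hj]
    have : ∑ p : Fin n, ζ ^ (p:ℕ) = 0 := by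
      rw [Fin.sum_univ_eq_sum_range (fun i => ζ ^ i), geom_sum_eq hζ1, hζn]
      simp
    rw [this, Matrix.one_apply_ne hjk, mul_zero]

/-- Corollary 2 (uniform sampling density on the non-null frequencies for a
non-injective union of circulant transforms, e.g. 2D isotropic total variation; the groups
`𝒢_k = {(j−1)n + k : j ∈ [ℓ]}` are encoded as `{(j, k) : j ∈ Fin ℓ}` via the index
identification `Fin ℓ × Fin n ≃ Fin (ℓ n)`). -/
theorem circulant_union_noninjective_uniform_density
    (n n₀ l : ℕ) (hn₀ : 0 < n₀) (hlt : n₀ < n) (hl : 0 < l) (γ : ℝ) (hγ : 0 < γ)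
    (φ lb : Fin l → Fin n → ℂ)
    (hlb : ∀ j, lb j = fun k => ((Real.sqrt n : ℝ) : ℂ) * (dft n).mulVec (φ j) k)
    (hzero : ∀ (j : Fin l) (k : Fin n), (k : ℕ) < n₀ → lb j k = 0)
    (hnz : ∀ k : Fin n, n₀ ≤ (k : ℕ) → 0 < ∑ j, ‖lb j k‖ ^ 2)
    (T : Matrix (Fin l × Fin n) (Fin n) ℂ)
    (hT : T = fun p k =>
      (((dft n)ᴴ * Matrix.diagonal (lb p.1) * dft n) * (dft n)ᴴ) p.2 k)
    (T' : Matrix (Fin l × Fin n) (Fin (n - n₀)) ℂ)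
    (hT' : ∀ (p : Fin l × Fin n) (k : Fin (n - n₀)),
      T' p k = T p ⟨n₀ + (k : ℕ), by have := k.2; omega⟩)
    (Tdag' : Matrix (Fin (n - n₀)) (Fin l × Fin n) ℂ)
    (hTdag' : IsMoorePenrose T' Tdag') :
    (∀ k k' : Fin (n - n₀),
        (((n - n₀ : ℕ) : ℝ) * γ * ⨆ k₁ : Fin n, ∑ j : Fin l, ‖T' (j, k₁) k‖ ^ 2) *
          (((n - n₀ : ℕ) : ℝ) * γ⁻¹ * ⨆ k₁ : Fin n, ∑ j : Fin l, ‖Tdag'ᴴ (j, k₁) k‖ ^ 2) =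
        (((n - n₀ : ℕ) : ℝ) * γ * ⨆ k₁ : Fin n, ∑ j : Fin l, ‖T' (j, k₁) k'‖ ^ 2) *
          (((n - n₀ : ℕ) : ℝ) * γ⁻¹ * ⨆ k₁ : Fin n, ∑ j : Fin l, ‖Tdag'ᴴ (j, k₁) k'‖ ^ 2)) ∧
    (∀ k : Fin (n - n₀),
        Real.sqrt ((((n - n₀ : ℕ) : ℝ) * γ * ⨆ k₁ : Fin n, ∑ j : Fin l, ‖T' (j, k₁) k‖ ^ 2) *
            (((n - n₀ : ℕ) : ℝ) * γ⁻¹ * ⨆ k₁ : Fin n, ∑ j : Fin l, ‖Tdag'ᴴ (j, k₁) k‖ ^ 2)) /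
          (∑ k₂ : Fin (n - n₀),
            Real.sqrt
              ((((n - n₀ : ℕ) : ℝ) * γ * ⨆ k₁ : Fin n, ∑ j : Fin l, ‖T' (j, k₁) k₂‖ ^ 2) *
                (((n - n₀ : ℕ) : ℝ) * γ⁻¹ *
                  ⨆ k₁ : Fin n, ∑ j : Fin l, ‖Tdag'ᴴ (j, k₁) k₂‖ ^ 2))) =
          1 / ((n - n₀ : ℕ) : ℝ)) := by
  have hn : 0 < n := lt_of_le_of_lt (Nat.zero_le _) hlt
  haveI : Nonempty (Fin n) := ⟨⟨0, hn⟩⟩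
  have hm : 0 < n - n₀ := Nat.sub_pos_of_lt hlt
  have hidx : ∀ k : Fin (n - n₀), n₀ + (k : ℕ) < n := fun k => by have := k.2; omega
  set idx : Fin (n - n₀) → Fin n := fun k => ⟨n₀ + k, hidx k⟩ with hidxdef
  have hU : dft n * (dft n)ᴴ = 1 := dft_unitary hn
  subst hT
  have hT'e : ∀ (j : Fin l) (p : Fin n) (k : Fin (n - n₀)),
      T' (j, p) k = (starRingEnd ℂ) (dft n (idx k) p) * lb j (idx k) := by
    intro j p k
    rw [hT' (j, p) k]
    show (((dft n)ᴴ * Matrix.diagonal (lb j) * dft n) * (dft n)ᴴ) p (idx k) = _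
    rw [Matrix.mul_assoc, hU, Matrix.mul_one, Matrix.mul_diagonal, Matrix.conjTranspose_apply]
    rfl
  set S : Fin (n - n₀) → ℝ := fun k => ∑ j, ‖lb j (idx k)‖ ^ 2 with hSdef
  have hSpos : ∀ k, 0 < S k := fun k => hnz (idx k) (Nat.le_add_right n₀ k)
  have hdftnorm : ∀ (j p : Fin n), ‖dft n j p‖ ^ 2 = (n : ℝ)⁻¹ := dft_norm hn
  have colsum : ∀ (k : Fin (n - n₀)) (p : Fin n),
      ∑ j : Fin l, ‖T' (j, p) k‖ ^ 2 = S k / n := by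
    intro k p
    have : ∀ j : Fin l, ‖T' (j, p) k‖ ^ 2 = (n : ℝ)⁻¹ * ‖lb j (idx k)‖ ^ 2 := by
      intro j
      rw [hT'e, norm_mul, mul_pow, RCLike.norm_conj, hdftnorm]
    rw [Finset.sum_congr rfl (fun j _ => this j), ← Finset.mul_sum, hSdef]
    rw [div_eq_inv_mul]
  have keyz : ∀ z : ℂ, (starRingEnd ℂ) z * z = ((‖z‖ ^ 2 : ℝ) : ℂ) := by
    intro z
    rw [mul_comm, Complex.mul_conj]
    simp [Complex.normSq_eq_norm_sq]
  have hgram : T'ᴴ * T' = Matrix.diagonal (fun k => ((S k : ℝ) : ℂ)) := by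
    ext k k'
    rw [Matrix.mul_apply, Fintype.sum_prod_type]
    have hsum : ∀ j : Fin l, ∑ p : Fin n, T'ᴴ k (j, p) * T' (j, p) k'
        = ((1 : Matrix (Fin n) (Fin n) ℂ) (idx k) (idx k')) *
            ((starRingEnd ℂ) (lb j (idx k)) * lb j (idx k')) := by
      intro j
      have hp : ∀ p : Fin n, T'ᴴ k (j, p) * T' (j, p) k'
          = (dft n (idx k) p * (dft n)ᴴ p (idx k')) *
              ((starRingEnd ℂ) (lb j (idx k)) * lb j (idx k')) := by
        intro p
        rw [Matrix.conjTranspose_apply, hT'e, hT'e, Matrix.conjTranspose_apply]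
        simp only [Complex.star_def, map_mul, Complex.conj_conj]
        ring
      rw [Finset.sum_congr rfl (fun p _ => hp p), ← Finset.sum_mul, ← Matrix.mul_apply, hU]
    rw [Finset.sum_congr rfl (fun j _ => hsum j), ← Finset.mul_sum]
    by_cases hkk : k = k'
    · subst hkk
      rw [Matrix.one_apply_eq, Matrix.diagonal_apply_eq, one_mul]
      rw [Finset.sum_congr rfl (fun j _ => keyz (lb j (idx k)))]
      rw [hSdef]
      push_cast
      rfl
    · have : idx k ≠ idx k' := by
        intro h
        apply hkk
        have := congrArg Fin.val h
        simp only [hidxdef] at this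
        exact Fin.ext (by omega)
      rw [Matrix.one_apply_ne this, Matrix.diagonal_apply_ne _ hkk, zero_mul]
  set Bm : Matrix (Fin (n - n₀)) (Fin l × Fin n) ℂ :=
    Matrix.diagonal (fun k => (((S k)⁻¹ : ℝ) : ℂ)) * T'ᴴ with hBmdef
  have hdd : Matrix.diagonal (fun k : Fin (n - n₀) => (((S k)⁻¹ : ℝ) : ℂ)) *
      Matrix.diagonal (fun k => ((S k : ℝ) : ℂ)) = 1 := by
    rw [Matrix.diagonal_mul_diagonal]
    have he : (fun k : Fin (n - n₀) => (((S k)⁻¹ : ℝ) : ℂ) * ((S k : ℝ) : ℂ))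
        = fun _ => (1 : ℂ) := by
      funext k
      rw [← Complex.ofReal_mul, inv_mul_cancel₀ (hSpos k).ne', Complex.ofReal_one]
    rw [he, Matrix.diagonal_one]
  have hBT : Bm * T' = 1 := by
    rw [hBmdef, Matrix.mul_assoc, hgram, hdd]
  have hdiagH : (Matrix.diagonal (fun k : Fin (n - n₀) => (((S k)⁻¹ : ℝ) : ℂ)))ᴴ
      = Matrix.diagonal (fun k => (((S k)⁻¹ : ℝ) : ℂ)) := by
    have he : (star fun k : Fin (n - n₀) => (((S k)⁻¹ : ℝ) : ℂ))
        = fun k => (((S k)⁻¹ : ℝ) : ℂ) := by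
      funext k
      simp [Complex.star_def, Complex.conj_ofReal]
    rw [Matrix.diagonal_conjTranspose, he]
  have hMP : IsMoorePenrose T' Bm := by
    refine ⟨?_, ?_, ?_, ?_⟩
    · rw [Matrix.mul_assoc, hBT, Matrix.mul_one]
    · rw [hBT, Matrix.one_mul]
    · rw [hBmdef, Matrix.conjTranspose_mul, Matrix.conjTranspose_mul, hdiagH,
        Matrix.conjTranspose_conjTranspose]
      simp only [Matrix.mul_assoc]
    · rw [hBT, Matrix.conjTranspose_one]
  have hTd : Tdag' = Bm := mp_unique hTdag' hMP
  have hTde : ∀ (j : Fin l) (p : Fin n) (k : Fin (n - n₀)),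
      Tdag'ᴴ (j, p) k = T' (j, p) k * (((S k)⁻¹ : ℝ) : ℂ) := by
    intro j p k
    rw [hTd, hBmdef, Matrix.conjTranspose_mul, Matrix.conjTranspose_conjTranspose, hdiagH,
      Matrix.mul_diagonal]
  have colsum2 : ∀ (k : Fin (n - n₀)) (p : Fin n),
      ∑ j : Fin l, ‖Tdag'ᴴ (j, p) k‖ ^ 2 = (S k)⁻¹ / n := by
    intro k p
    have : ∀ j : Fin l, ‖Tdag'ᴴ (j, p) k‖ ^ 2 = ‖T' (j, p) k‖ ^ 2 * ((S k)⁻¹) ^ 2 := by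
      intro j
      rw [hTde, norm_mul, mul_pow, Complex.norm_real, Real.norm_eq_abs,
        abs_of_pos (inv_pos.2 (hSpos k))]
    rw [Finset.sum_congr rfl (fun j _ => this j), ← Finset.sum_mul, colsum]
    have hS := (hSpos k).ne'
    have hn' : (n : ℝ) ≠ 0 := Nat.cast_ne_zero.2 hn.ne'
    field_simp
  have hsup1 : ∀ k : Fin (n - n₀),
      (⨆ k₁ : Fin n, ∑ j : Fin l, ‖T' (j, k₁) k‖ ^ 2) = S k / n := by
    intro k
    simp only [colsum]
    exact ciSup_const
  have hsup2 : ∀ k : Fin (n - n₀),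
      (⨆ k₁ : Fin n, ∑ j : Fin l, ‖Tdag'ᴴ (j, k₁) k‖ ^ 2) = (S k)⁻¹ / n := by
    intro k
    simp only [colsum2]
    exact ciSup_const
  have hn' : (n : ℝ) ≠ 0 := Nat.cast_ne_zero.2 hn.ne'
  have hm' : ((n - n₀ : ℕ) : ℝ) ≠ 0 := Nat.cast_ne_zero.2 hm.ne'
  have prod : ∀ k : Fin (n - n₀),
      (((n - n₀ : ℕ) : ℝ) * γ * (S k / n)) * (((n - n₀ : ℕ) : ℝ) * γ⁻¹ * ((S k)⁻¹ / n))
        = ((n - n₀ : ℕ) : ℝ) ^ 2 / (n : ℝ) ^ 2 := by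
    intro k
    have hS := (hSpos k).ne'
    field_simp
  constructor
  · intro k k'
    rw [hsup1 k, hsup1 k', hsup2 k, hsup2 k', prod k, prod k']
  · intro k
    have hw : ∀ k₂ : Fin (n - n₀),
        Real.sqrt ((((n - n₀ : ℕ) : ℝ) * γ * ⨆ k₁ : Fin n, ∑ j : Fin l, ‖T' (j, k₁) k₂‖ ^ 2) *
          (((n - n₀ : ℕ) : ℝ) * γ⁻¹ * ⨆ k₁ : Fin n, ∑ j : Fin l, ‖Tdag'ᴴ (j, k₁) k₂‖ ^ 2))
        = ((n - n₀ : ℕ) : ℝ) / n := by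
      intro k₂
      rw [hsup1 k₂, hsup2 k₂, prod k₂,
        show ((n - n₀ : ℕ) : ℝ) ^ 2 / (n : ℝ) ^ 2 = (((n - n₀ : ℕ) : ℝ) / n) ^ 2 by ring,
        Real.sqrt_sq (by positivity)]
    rw [hw k, Finset.sum_congr rfl (fun k₂ _ => hw k₂), Finset.sum_const,
      Finset.card_univ, Fintype.card_fin, nsmul_eq_mul]
    field_simp

end TSR
end
end

section
/- Let T : ℂ^n → ℂ^N be injective, let x ∈ ℂ^n, and let J ⊆ [N] be the support of Tx. Let Ω be a multiset of m indices in [n] and Ω' the set of its distinct elements. Suppose ‖ Π_J ( (n/m) T S_Ω* S_Ω T† − T T† ) Π_J ‖ ≤ 1/2, and suppose there exists v ∈ ℂ^N satisfying: (i) (T T† − T S_{Ω'}* S_{Ω'} T†)* v = 0; (ii) ‖Π_J ( v − sgn(Tx) )‖_2 ≤ 1/(7 n ‖T‖_{1→2} ‖T†‖_{2→∞}); and (iii) ‖(I_N − Π_J) v‖_∞ ≤ 1/2. Then x is the unique minimizer of the program (P0): minimize ‖T g‖_1 over g ∈ ℂ^n subject to S_Ω g = S_Ω x. -/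
open scoped BigOperators ENNReal
open Classical MeasureTheory
open scoped Matrix

noncomputable section

namespace TSR

section Helpers
variable {d e m n : ℕ}

lemma l2norm_nonneg (v : Fin d → ℂ) : 0 ≤ l2norm v := Real.sqrt_nonneg _

lemma l2norm_eq_norm (v : Fin d → ℂ) :
    l2norm v = ‖(WithLp.equiv 2 (Fin d → ℂ)).symm v‖ := by
  rw [EuclideanSpace.norm_eq]; rfl

lemma l2norm_eq_zero {v : Fin d → ℂ} (h : l2norm v = 0) : v = 0 := by
  rw [l2norm_eq_norm, norm_eq_zero] at h
  simpa using congrArg (WithLp.equiv 2 (Fin d → ℂ)) h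

lemma l2norm_add_le (a b : Fin d → ℂ) : l2norm (a + b) ≤ l2norm a + l2norm b := by
  simp only [l2norm_eq_norm]
  rw [show (WithLp.equiv 2 (Fin d → ℂ)).symm (a + b)
      = (WithLp.equiv 2 (Fin d → ℂ)).symm a + (WithLp.equiv 2 (Fin d → ℂ)).symm b from rfl]
  exact norm_add_le _ _

lemma l2norm_neg (a : Fin d → ℂ) : l2norm (-a) = l2norm a := by
  simp [l2norm]

lemma l2norm_smul (c : ℂ) (a : Fin d → ℂ) : l2norm (c • a) = ‖c‖ * l2norm a := by
  simp only [l2norm_eq_norm]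
  rw [show (WithLp.equiv 2 (Fin d → ℂ)).symm (c • a)
      = c • (WithLp.equiv 2 (Fin d → ℂ)).symm a from rfl]
  exact norm_smul _ _

lemma l2norm_sum_le {ι : Type*} (s : Finset ι) (f : ι → Fin d → ℂ) :
    l2norm (∑ k ∈ s, f k) ≤ ∑ k ∈ s, l2norm (f k) := by
  simp only [l2norm_eq_norm]
  rw [show (WithLp.equiv 2 (Fin d → ℂ)).symm (∑ k ∈ s, f k)
      = ∑ k ∈ s, (WithLp.equiv 2 (Fin d → ℂ)).symm (f k) from WithLp.toLp_sum 2 (Fin d → ℂ) s f]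
  exact norm_sum_le _ _

lemma entry_le_l2norm (v : Fin d → ℂ) (i : Fin d) : ‖v i‖ ≤ l2norm v := by
  rw [l2norm, show ‖v i‖ = Real.sqrt (‖v i‖ ^ 2) by
    rw [Real.sqrt_sq (norm_nonneg _)]]
  exact Real.sqrt_le_sqrt (Finset.single_le_sum (f := fun j => ‖v j‖ ^ 2)
    (fun j _ => by positivity) (Finset.mem_univ i))

lemma l2norm_ite_le (p : Fin d → Prop) (v : Fin d → ℂ) :
    l2norm (fun i => if p i then v i else 0) ≤ l2norm v := by
  refine Real.sqrt_le_sqrt (Finset.sum_le_sum fun i _ => ?_)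
  by_cases h : p i <;> simp [h]

lemma cauchy_schwarz (a b : Fin d → ℂ) :
    ‖∑ i, (starRingEnd ℂ) (a i) * b i‖ ≤ l2norm a * l2norm b := by
  calc ‖∑ i, (starRingEnd ℂ) (a i) * b i‖ ≤ ∑ i, ‖(starRingEnd ℂ) (a i) * b i‖ :=
        norm_sum_le _ _
    _ = ∑ i, ‖a i‖ * ‖b i‖ := by simp [norm_mul]
    _ ≤ _ := Real.sum_mul_le_sqrt_mul_sqrt _ _ _

lemma specNorm_bound (A : Matrix (Fin d) (Fin e) ℂ) (v : Fin e → ℂ) :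
    l2norm (A.mulVec v) ≤ specNorm A * l2norm v := by
  rw [l2norm_eq_norm, l2norm_eq_norm, specNorm]
  have := (LinearMap.toContinuousLinearMap (Matrix.toEuclideanLin A)).le_opNorm
    ((WithLp.equiv 2 (Fin e → ℂ)).symm v)
  simpa [Matrix.toEuclideanLin_apply_piLp_toLp] using this

lemma mulVec_eq_sum_cols (A : Matrix (Fin d) (Fin e) ℂ) (v : Fin e → ℂ) :
    A.mulVec v = ∑ k, v k • (fun i => A i k) := by
  funext i
  simp [Matrix.mulVec, dotProduct, Finset.sum_apply, mul_comm]

lemma sampMat_mulVec (ω : Fin m → Fin n) (y : Fin n → ℂ) (j : Fin m) :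
    (sampMat ω).mulVec y j = y (ω j) := by
  simp [sampMat, Matrix.mulVec, dotProduct]

lemma projMat_mulVec (J : Set (Fin d)) (y : Fin d → ℂ) :
    (projMat J).mulVec y = fun i => if i ∈ J then y i else 0 := by
  funext i
  simp only [projMat, Matrix.mulVec, dotProduct]
  by_cases h : i ∈ J <;> simp [h, Finset.sum_ite_eq, eq_comm]


lemma linf_entry_le (v : Fin d → ℂ) (i : Fin d) : ‖v i‖ ≤ linfnorm v := by
  exact le_ciSup (f := fun i => ‖v i‖) (Set.Finite.bddAbove (Set.finite_range _)) i

lemma col_le_maxColL2 (A : Matrix (Fin d) (Fin e) ℂ) (k : Fin e) :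
    l2norm (fun i => A i k) ≤ maxColL2 A := by
  exact le_ciSup (f := fun k => l2norm (fun i => A i k))
    (Set.Finite.bddAbove (Set.finite_range _)) k

lemma entry_le_maxColL2 (A : Matrix (Fin d) (Fin e) ℂ) (i : Fin d) (k : Fin e) :
    ‖A i k‖ ≤ maxColL2 A :=
  (entry_le_l2norm (fun i => A i k) i).trans (col_le_maxColL2 A k)

lemma TSH_mulVec (T : Matrix (Fin d) (Fin n) ℂ) (ω : Fin m → Fin n) (r : Fin m → ℂ) :
    (T * (sampMat ω)ᴴ).mulVec r = ∑ j, r j • (fun i => T i (ω j)) := by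
  funext i
  simp only [Matrix.mulVec, dotProduct, Matrix.mul_apply, Matrix.conjTranspose_apply,
    sampMat, Finset.sum_apply, Pi.smul_apply, smul_eq_mul]
  congr 1
  funext j
  rw [Finset.sum_congr rfl (fun a _ => by
    rw [show (star (if ω j = a then (1:ℂ) else 0)) = if a = ω j then (1:ℂ) else 0 by
      split <;> simp_all [eq_comm]]),
    show ∑ a, T i a * (if a = ω j then (1:ℂ) else 0)
      = ∑ a, (if a = ω j then T i (ω j) else 0) from Finset.sum_congr rfl (fun a _ => by
        split <;> simp_all)]
  simp [mul_comm]

lemma dotconj_mulVec (A : Matrix (Fin d) (Fin e) ℂ) (v : Fin d → ℂ) (z : Fin e → ℂ) :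
    ∑ i, (starRingEnd ℂ) (v i) * (A.mulVec z) i
      = ∑ j, (starRingEnd ℂ) ((Aᴴ.mulVec v) j) * z j := by
  simp only [Matrix.mulVec, dotProduct, Matrix.conjTranspose_apply, Finset.mul_sum,
    map_sum, map_mul, Finset.sum_mul, starRingEnd_apply, star_star]
  rw [Finset.sum_comm]
  congr 1; funext j; congr 1; funext i; ring

lemma herm_idem_col (P : Matrix (Fin d) (Fin d) ℂ) (hP : Pᴴ = P) (hP2 : P * P = P)
    (k : Fin d) : l2norm (fun i => P i k) ≤ 1 := by
  set s : ℝ := ∑ i, ‖P i k‖ ^ 2 with hs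
  have hs0 : 0 ≤ s := Finset.sum_nonneg fun i _ => by positivity
  have hPk : P k k = (s : ℂ) := by
    conv_lhs => rw [← hP2]
    have h2 : (P * P) k k = (Pᴴ * P) k k := by rw [hP]
    rw [h2, Matrix.mul_apply]
    simp only [Matrix.conjTranspose_apply, hs]
    push_cast
    congr 1; funext i
    rw [show star (P i k) * P i k = ((‖P i k‖ ^ 2 : ℝ) : ℂ) by
      simp [Complex.star_def, Complex.conj_mul']]
    push_cast; ring
  have hle : s ^ 2 ≤ s := by
    have h1 : ‖P k k‖ ^ 2 ≤ s := Finset.single_le_sum (f := fun i => ‖P i k‖ ^ 2)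
      (fun i _ => by positivity) (Finset.mem_univ k)
    rw [hPk] at h1
    rwa [Complex.norm_real, Real.norm_eq_abs, abs_of_nonneg hs0] at h1
  have hs1 : s ≤ 1 := by nlinarith
  rw [l2norm, ← hs]
  exact Real.sqrt_le_one.mpr hs1

lemma star_mul_self_eq (z : ℂ) : (starRingEnd ℂ) z * z = ((‖z‖^2 : ℝ) : ℂ) := by
  simp [Complex.star_def, Complex.conj_mul']

lemma re_le_norm (z : ℂ) : z.re ≤ ‖z‖ := by
  exact Complex.re_le_norm z

lemma abs_re_le_norm (z : ℂ) : |z.re| ≤ ‖z‖ := by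
  exact Complex.abs_re_le_norm z
end Helpers

set_option maxHeartbeats 1000000 in
/-- Lemma 1 (uniqueness via an inexact dual certificate). -/
theorem uniqueness_by_inexact_dual_certificate
    (n N m : ℕ) (hn : 0 < n) (hN : 0 < N) (hm : 0 < m)
    (T : Matrix (Fin N) (Fin n) ℂ) (Tdag : Matrix (Fin n) (Fin N) ℂ)
    (hinj : Function.Injective T.mulVec)
    (hmp : IsMoorePenrose T Tdag)
    (x : Fin n → ℂ) (ω : Fin m → Fin n)
    (J : Set (Fin N)) (hJ : J = {i | T.mulVec x i ≠ 0})
    (hloc : specNorm (projMat J *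
        (((n : ℂ) / m) • (T * (sampMat ω)ᴴ * sampMat ω * Tdag) - T * Tdag) *
        projMat J) ≤ 1 / 2)
    (v : Fin N → ℂ)
    (hv1 : ((T * Tdag - T * projMat (Set.range ω) * Tdag)ᴴ).mulVec v = 0)
    (hv2 : l2norm ((projMat J).mulVec (v - csgn (T.mulVec x))) ≤
      1 / (7 * n * maxColL2 T * maxColL2 Tdagᴴ))
    (hv3 : linfnorm (((1 : Matrix (Fin N) (Fin N) ℂ) - projMat J).mulVec v) ≤ 1 / 2) :
    ∀ g : Fin n → ℂ, (sampMat ω).mulVec g = (sampMat ω).mulVec x → g ≠ x →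
      l1norm (T.mulVec x) < l1norm (T.mulVec g) := by
  intro g hg hne
  have hTdagT : ∀ y : Fin n → ℂ, Tdag.mulVec (T.mulVec y) = y := by
    intro y
    apply hinj
    rw [Matrix.mulVec_mulVec, Matrix.mulVec_mulVec, hmp.1]
  set u : Fin n → ℂ := g - x with hu_def
  have hu : ∀ j : Fin m, u (ω j) = 0 := by
    intro j
    have h := congrFun hg j
    rw [sampMat_mulVec, sampMat_mulVec] at h
    simp [hu_def, h]
  -- n = 1 degenerate case
  rcases lt_or_ge n 2 with hn1 | hn2
  · exfalso; apply hne
    funext k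
    have hk : k = ω ⟨0, hm⟩ := by
      have h1 := k.isLt
      have h2 := (ω ⟨0, hm⟩).isLt
      apply Fin.ext; omega
    have := hu ⟨0, hm⟩
    rw [← hk] at this
    have h2 : g k - x k = 0 := this
    exact sub_eq_zero.mp h2
  
  -- main case : n ≥ 2
  set Tx : Fin N → ℂ := T.mulVec x with hTx_def
  set z : Fin N → ℂ := T.mulVec u with hz_def
  set w : Fin N → ℂ := fun i => if i ∈ J then z i else 0 with hw_def
  set wc : Fin N → ℂ := fun i => if i ∈ J then 0 else z i with hwc_def
  have hzw : z = w + wc := by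
    funext i; by_cases h : i ∈ J <;> simp [hw_def, hwc_def, h]
  set MT : ℝ := maxColL2 T with hMT_def
  set MD : ℝ := maxColL2 Tdagᴴ with hMD_def
  set K : ℝ := n * MT * MD with hK_def
  have hMT0 : 0 ≤ MT := Real.iSup_nonneg fun k => l2norm_nonneg _
  have hMD0 : 0 ≤ MD := Real.iSup_nonneg fun k => l2norm_nonneg _
  -- MT * MD ≥ 1
  have hMTMD : 1 ≤ MT * MD := by
    have i0 : Fin n := ⟨0, hn⟩
    have h1 : Tdag.mulVec (T.mulVec (Pi.single i0 1)) i0 = 1 := by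
      rw [hTdagT]; simp
    have h2 : (1 : ℝ) = ‖∑ a : Fin N, Tdag i0 a * T a i0‖ := by
      rw [show ∑ a : Fin N, Tdag i0 a * T a i0 = Tdag.mulVec (T.mulVec (Pi.single i0 1)) i0 by
        simp only [Matrix.mulVec, dotProduct]
        congr 1; funext a; congr 1
        simp [Pi.single_apply, Finset.sum_ite_eq]]
      rw [h1]; simp
    have h3 : ‖∑ a : Fin N, Tdag i0 a * T a i0‖ ≤ ∑ a : Fin N, ‖Tdag i0 a‖ * ‖T a i0‖ := by
      refine (norm_sum_le _ _).trans ?_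
      exact le_of_eq (Finset.sum_congr rfl fun a _ => norm_mul _ _)
    have h4 : ∑ a : Fin N, ‖Tdag i0 a‖ * ‖T a i0‖ ≤
        l2norm (fun a => Tdagᴴ a i0) * l2norm (fun a => T a i0) := by
      have := Real.sum_mul_le_sqrt_mul_sqrt Finset.univ
        (fun a : Fin N => ‖Tdag i0 a‖) (fun a : Fin N => ‖T a i0‖)
      simpa [l2norm, Matrix.conjTranspose_apply] using this
    calc (1:ℝ) = ‖∑ a : Fin N, Tdag i0 a * T a i0‖ := h2
      _ ≤ _ := h3.trans h4
      _ ≤ MT * MD := by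
          rw [mul_comm MT MD]
          exact mul_le_mul (col_le_maxColL2 Tdagᴴ i0) (col_le_maxColL2 T i0)
            (l2norm_nonneg _) hMD0
  have hK2 : 2 ≤ K := by
    have : (2:ℝ) ≤ n := by exact_mod_cast hn2
    rw [hK_def, mul_assoc]
    nlinarith
  have hK0 : 0 < K := by linarith
  -- certificate orthogonality
  have hinner : ∑ i, (starRingEnd ℂ) (v i) * z i = 0 := by
    have hAz : (T * Tdag - T * projMat (Set.range ω) * Tdag).mulVec z = z := by
      rw [Matrix.sub_mulVec]
      have h1 : (T * Tdag).mulVec z = z := by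
        rw [hz_def, ← Matrix.mulVec_mulVec, hTdagT]
      have h2 : (T * projMat (Set.range ω) * Tdag).mulVec z = 0 := by
        rw [hz_def, ← Matrix.mulVec_mulVec, hTdagT, ← Matrix.mulVec_mulVec]
        have : (projMat (Set.range ω)).mulVec u = 0 := by
          rw [projMat_mulVec]
          funext i
          by_cases h : i ∈ Set.range ω
          · obtain ⟨j, rfl⟩ := h
            simp [hu j]
          · simp [h]
        rw [this, Matrix.mulVec_zero]
      rw [h1, h2, sub_zero]
    conv_lhs => rw [← hAz]
    rw [dotconj_mulVec, hv1]
    simp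
  -- the B matrix and the key norm bound on w
  set Bm : Matrix (Fin N) (Fin N) ℂ :=
    ((n : ℂ) / m) • (T * (sampMat ω)ᴴ * sampMat ω * Tdag) - T * Tdag with hBm_def
  have hBz : Bm.mulVec z = -z := by
    rw [hBm_def, Matrix.sub_mulVec, Matrix.smul_mulVec]
    have h1 : (T * (sampMat ω)ᴴ * sampMat ω * Tdag).mulVec z = 0 := by
      rw [hz_def, ← Matrix.mulVec_mulVec, hTdagT, ← Matrix.mulVec_mulVec]
      have hSu : (sampMat ω).mulVec u = 0 := by
        funext j; rw [sampMat_mulVec]; exact hu j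
      rw [hSu, Matrix.mulVec_zero]
    have h2 : (T * Tdag).mulVec z = z := by
      rw [hz_def, ← Matrix.mulVec_mulVec, hTdagT]
    rw [h1, h2, smul_zero, zero_sub]
  have hPjw : (projMat J).mulVec w = w := by
    rw [projMat_mulVec]
    funext i; by_cases h : i ∈ J <;> simp [hw_def, h]
  have hPjz : (projMat J).mulVec z = w := by
    rw [projMat_mulVec]
  have hw_key : w = -((projMat J * Bm * projMat J).mulVec w
      + (projMat J).mulVec (Bm.mulVec wc)) := by
    have e1 : (projMat J * Bm * projMat J).mulVec w
        = (projMat J).mulVec (Bm.mulVec w) := by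
      rw [← Matrix.mulVec_mulVec, ← Matrix.mulVec_mulVec, hPjw]
    have e2 : Bm.mulVec w = -z - Bm.mulVec wc := by
      have : Bm.mulVec z = Bm.mulVec w + Bm.mulVec wc := by
        rw [hzw, Matrix.mulVec_add]
      rw [hBz] at this
      exact eq_sub_of_add_eq this.symm
    rw [e1, e2]
    rw [Matrix.mulVec_sub, Matrix.mulVec_neg, hPjz]
    module
  have hw_le : l2norm w ≤ 2 * l2norm (Bm.mulVec wc) := by
    have h1 : l2norm w ≤ specNorm (projMat J * Bm * projMat J) * l2norm w
        + l2norm (Bm.mulVec wc) := by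
      conv_lhs => rw [hw_key]
      rw [l2norm_neg]
      refine (l2norm_add_le _ _).trans ?_
      gcongr
      · exact specNorm_bound _ _
      · rw [projMat_mulVec]
        exact l2norm_ite_le _ _
    have h2 := mul_le_mul_of_nonneg_right hloc (l2norm_nonneg w)
    linarith
  -- bound on Bm *ᵥ wc
  have hq : ∀ a : Fin n, ‖(Tdag.mulVec wc) a‖ ≤ MD * l1norm wc := by
    intro a
    rw [show (Tdag.mulVec wc) a = ∑ k, Tdag a k * wc k from rfl]
    refine (norm_sum_le _ _).trans ?_
    rw [l1norm, Finset.mul_sum]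
    refine Finset.sum_le_sum fun k _ => ?_
    rw [norm_mul]
    have : ‖Tdag a k‖ ≤ MD := by
      have := entry_le_maxColL2 Tdagᴴ k a
      simpa [Matrix.conjTranspose_apply] using this
    exact mul_le_mul_of_nonneg_right this (norm_nonneg _)
  have hBwc : l2norm (Bm.mulVec wc) ≤ (K + 1) * l1norm wc := by
    have hl1nn : 0 ≤ l1norm wc := Finset.sum_nonneg fun i _ => norm_nonneg _
    rw [hBm_def, Matrix.sub_mulVec, Matrix.smul_mulVec, sub_eq_add_neg]
    refine (l2norm_add_le _ _).trans ?_
    rw [l2norm_neg, l2norm_smul]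
    have hnorm_nm : ‖((n : ℂ) / m)‖ = (n : ℝ) / m := by
      rw [norm_div]
      simp [Complex.norm_natCast]
    rw [hnorm_nm]
    have hA : l2norm ((T * (sampMat ω)ᴴ * sampMat ω * Tdag).mulVec wc)
        ≤ m * (MD * l1norm wc * MT) := by
      rw [← Matrix.mulVec_mulVec, ← Matrix.mulVec_mulVec]
      set r : Fin m → ℂ := (sampMat ω).mulVec (Tdag.mulVec wc) with hr_def
      rw [TSH_mulVec]
      refine (l2norm_sum_le _ _).trans ?_
      have : ∀ j : Fin m, l2norm (r j • fun i => T i (ω j)) ≤ MD * l1norm wc * MT := by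
        intro j
        rw [l2norm_smul]
        have hrj : ‖r j‖ ≤ MD * l1norm wc := by
          rw [hr_def, sampMat_mulVec]
          exact hq (ω j)
        exact mul_le_mul hrj (col_le_maxColL2 T (ω j)) (l2norm_nonneg _)
          (by positivity)
      refine (Finset.sum_le_sum fun j _ => this j).trans ?_
      rw [Finset.sum_const, Finset.card_univ, Fintype.card_fin, nsmul_eq_mul]
    have hB : l2norm ((T * Tdag).mulVec wc) ≤ l1norm wc := by
      rw [mulVec_eq_sum_cols]
      refine (l2norm_sum_le _ _).trans ?_
      rw [l1norm]
      refine Finset.sum_le_sum fun k _ => ?_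
      rw [l2norm_smul]
      have hcol : l2norm (fun i => (T * Tdag) i k) ≤ 1 := by
        refine herm_idem_col _ hmp.2.2.1 ?_ k
        rw [← Matrix.mul_assoc, hmp.1]
      nlinarith [norm_nonneg (wc k), l2norm_nonneg (fun i => (T * Tdag) i k)]
    have hm0 : (0:ℝ) < m := by exact_mod_cast hm
    calc (n:ℝ)/m * l2norm ((T * (sampMat ω)ᴴ * sampMat ω * Tdag).mulVec wc)
        + l2norm ((T * Tdag).mulVec wc)
        ≤ (n:ℝ)/m * (m * (MD * l1norm wc * MT)) + l1norm wc := by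
          gcongr
      _ = K * l1norm wc + l1norm wc := by
          rw [hK_def]; field_simp
      _ = (K + 1) * l1norm wc := by ring
  -- the sign-term bound
  have hsgn_w : ∀ i : Fin N,
      ‖Tx i + z i‖ ≥ ‖Tx i‖ + ((starRingEnd ℂ) (csgn Tx i) * w i).re + ‖wc i‖ := by
    intro i
    by_cases h : i ∈ J
    · have hTxi : Tx i ≠ 0 := by rw [hJ] at h; exact h
      have hwi : w i = z i := by simp [hw_def, h]
      have hwci : wc i = 0 := by simp [hwc_def, h]
      rw [hwi, hwci, norm_zero, add_zero]
      set c : ℂ := csgn Tx i with hc_def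
      have hcval : c = Tx i / (‖Tx i‖ : ℂ) := by simp [hc_def, csgn, hTxi]
      have hcnorm : ‖c‖ = 1 := by
        rw [hcval, norm_div]
        simp [hTxi, norm_ne_zero_iff.mpr hTxi]
      have hkey : ((starRingEnd ℂ) c * (Tx i + z i)).re ≤ ‖Tx i + z i‖ := by
        calc ((starRingEnd ℂ) c * (Tx i + z i)).re ≤ ‖(starRingEnd ℂ) c * (Tx i + z i)‖ :=
              re_le_norm _
          _ = ‖Tx i + z i‖ := by rw [norm_mul, RCLike.norm_conj, hcnorm, one_mul]
      have hmulc : (starRingEnd ℂ) c * Tx i = ((‖Tx i‖ : ℝ) : ℂ) := by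
        have ha : ((‖Tx i‖ : ℝ) : ℂ) ≠ 0 := by
          simpa using norm_ne_zero_iff.mpr hTxi
        rw [hcval, map_div₀, Complex.conj_ofReal, div_mul_eq_mul_div,
          star_mul_self_eq, sq]
        push_cast
        field_simp
      have hsplit : ((starRingEnd ℂ) c * (Tx i + z i)).re
          = ‖Tx i‖ + ((starRingEnd ℂ) c * z i).re := by
        rw [mul_add, Complex.add_re, hmulc]
        simp
      linarith [hkey, hsplit.symm.le]
    · have hTxi : Tx i = 0 := by
        by_contra hc
        exact h (by rw [hJ]; exact hc)
      have hwi : w i = 0 := by simp [hw_def, h]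
      have hwci : wc i = z i := by simp [hwc_def, h]
      rw [hTxi, hwi, hwci, norm_zero, zero_add, mul_zero]
      simp
  have hmain : l1norm Tx + ((∑ i, (starRingEnd ℂ) (csgn Tx i) * w i).re) + l1norm wc
      ≤ l1norm (T.mulVec g) := by
    have hTg : T.mulVec g = fun i => Tx i + z i := by
      funext i
      rw [hz_def, hu_def, Matrix.mulVec_sub]
      simp [hTx_def]
    rw [hTg, l1norm, l1norm, l1norm, Complex.re_sum, ← Finset.sum_add_distrib,
      ← Finset.sum_add_distrib]
    exact Finset.sum_le_sum fun i _ => hsgn_w i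
  -- bound the sign term from below
  have hterm1 : ‖∑ i, (starRingEnd ℂ) ((csgn Tx - v) i) * w i‖ ≤ (1 / (7*K)) * l2norm w := by
    have hrw : ∑ i, (starRingEnd ℂ) ((csgn Tx - v) i) * w i
        = ∑ i, (starRingEnd ℂ) ((-((projMat J).mulVec (v - csgn Tx))) i) * w i := by
      refine Finset.sum_congr rfl fun i _ => ?_
      by_cases h : i ∈ J
      · congr 2
        rw [projMat_mulVec]
        simp [h]
      · have : w i = 0 := by simp [hw_def, h]
        rw [this, mul_zero, mul_zero]
    rw [hrw]
    refine (cauchy_schwarz _ _).trans ?_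
    rw [l2norm_neg]
    have h72 : 1 / (7 * (n:ℝ) * MT * MD) = 1 / (7 * K) := by rw [hK_def]; ring_nf
    refine mul_le_mul_of_nonneg_right ?_ (l2norm_nonneg _)
    rw [← h72]
    exact hv2
  have hterm2 : ‖(∑ i, (starRingEnd ℂ) (v i) * wc i)‖ ≤ (1/2) * l1norm wc := by
    refine (norm_sum_le _ _).trans ?_
    rw [l1norm, Finset.mul_sum]
    refine Finset.sum_le_sum fun i _ => ?_
    rw [norm_mul, RCLike.norm_conj]
    by_cases h : i ∈ J
    · have : wc i = 0 := by simp [hwc_def, h]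
      simp [this]
    · have hvi : ‖v i‖ ≤ 1/2 := by
        have hentry := linf_entry_le (((1 : Matrix (Fin N) (Fin N) ℂ) - projMat J).mulVec v) i
        have heq : (((1 : Matrix (Fin N) (Fin N) ℂ) - projMat J).mulVec v) i = v i := by
          rw [Matrix.sub_mulVec, Matrix.one_mulVec, projMat_mulVec]
          simp [h]
        rw [heq] at hentry
        exact hentry.trans hv3
      exact mul_le_mul_of_nonneg_right hvi (norm_nonneg _)
  have hsgn_split : (∑ i, (starRingEnd ℂ) (csgn Tx i) * w i)
      = (∑ i, (starRingEnd ℂ) ((csgn Tx - v) i) * w i)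
        - (∑ i, (starRingEnd ℂ) (v i) * wc i) := by
    have h1 : ∑ i, (starRingEnd ℂ) (v i) * w i
        = - ∑ i, (starRingEnd ℂ) (v i) * wc i := by
      have : ∑ i, (starRingEnd ℂ) (v i) * w i + ∑ i, (starRingEnd ℂ) (v i) * wc i
          = ∑ i, (starRingEnd ℂ) (v i) * z i := by
        rw [← Finset.sum_add_distrib]
        refine Finset.sum_congr rfl fun i _ => ?_
        rw [hzw]
        simp [mul_add]
      rw [hinner] at this
      linear_combination this
    calc (∑ i, (starRingEnd ℂ) (csgn Tx i) * w i)
        = (∑ i, (starRingEnd ℂ) ((csgn Tx - v) i) * w i)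
          + ∑ i, (starRingEnd ℂ) (v i) * w i := by
          rw [← Finset.sum_add_distrib]
          refine Finset.sum_congr rfl fun i _ => ?_
          simp [map_sub, sub_mul]
      _ = _ := by rw [h1]; ring
  -- case split on wc
  by_cases hwc0 : wc = 0
  · exfalso
    have hBwc0 : l2norm (Bm.mulVec wc) = 0 := by
      rw [hwc0, Matrix.mulVec_zero]
      simp [l2norm]
    have hw0 : w = 0 := by
      apply l2norm_eq_zero
      have := hw_le
      rw [hBwc0] at this
      nlinarith [l2norm_nonneg w]
    have hz0 : z = 0 := by rw [hzw, hw0, hwc0]; simp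
    have hu0 : u = 0 := by
      apply hinj
      rw [← hz_def, hz0, Matrix.mulVec_zero]
    apply hne
    rw [hu_def] at hu0
    funext k
    have := congrFun hu0 k
    simpa [sub_eq_zero] using this
  · -- wc ≠ 0 : strict inequality
    have hl1pos : 0 < l1norm wc := by
      obtain ⟨i, hi⟩ : ∃ i, wc i ≠ 0 := by
        by_contra hc
        push_neg at hc
        exact hwc0 (funext hc)
      have : 0 < ‖wc i‖ := norm_pos_iff.mpr hi
      have hle : ‖wc i‖ ≤ l1norm wc :=
        Finset.single_le_sum (f := fun i => ‖wc i‖) (fun i _ => norm_nonneg _)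
          (Finset.mem_univ i)
      linarith
    have hS1 : -((1/(7*K)) * l2norm w) - (1/2) * l1norm wc
        ≤ (∑ i, (starRingEnd ℂ) (csgn Tx i) * w i).re := by
      rw [hsgn_split, Complex.sub_re]
      have a1 : -((1/(7*K)) * l2norm w) ≤ (∑ i, (starRingEnd ℂ) ((csgn Tx - v) i) * w i).re := by
        have := neg_abs_le (∑ i, (starRingEnd ℂ) ((csgn Tx - v) i) * w i).re
        have h2 : |(∑ i, (starRingEnd ℂ) ((csgn Tx - v) i) * w i).re|
            ≤ (1/(7*K)) * l2norm w := (abs_re_le_norm _).trans hterm1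
        linarith
      have a2 : (∑ i, (starRingEnd ℂ) (v i) * wc i).re ≤ (1/2) * l1norm wc := by
        have h1 := abs_re_le_norm (∑ i, (starRingEnd ℂ) (v i) * wc i)
        have h2 := le_abs_self (∑ i, (starRingEnd ℂ) (v i) * wc i).re
        linarith [hterm2]
      linarith
    have hwfull : l2norm w ≤ 2 * (K + 1) * l1norm wc := by
      calc l2norm w ≤ 2 * l2norm (Bm.mulVec wc) := hw_le
        _ ≤ 2 * ((K + 1) * l1norm wc) := by linarith [hBwc]
        _ = 2 * (K + 1) * l1norm wc := by ring
    have hfrac : (1/(7*K)) * (2 * (K + 1) * l1norm wc) ≤ (3/7) * l1norm wc := by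
      rw [div_mul_eq_mul_div, one_mul]
      rw [div_le_iff₀ (by linarith : (0:ℝ) < 7*K)]
      nlinarith
    have hloss : (1/(7*K)) * l2norm w ≤ (3/7) * l1norm wc := by
      refine le_trans ?_ hfrac
      have : 0 < 1/(7*K) := by positivity
      nlinarith
    linarith [hmain, hS1, hloss]

end TSR
end
end
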